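/- arXiv:0808.1860 — 3 statements merged into one kernel-verified Lean document; each statement's English description precedes it below -/
import Mathlib

section
/- Let V be a variety with 0⃗ & 1⃗. If V has the Determining Property, then V has Boolean Factor Congruences. -/
open FirstOrder Language

universe u v w

namespace Paper

variable {L : FirstOrder.Language.{v, w}}

/-- The direct product of two `L`-structures, with pointwise operations. -/
instance prodStructure (A : Type*) (B : Type*) [L.Structure A] [L.Structure B] :
    L.Structure (A × B) where
  funMap f x := (Structure.funMap f fun i => (x i).1, Structure.funMap f fun i => (x i).2)
  RelMap r x := Structure.RelMap r (fun i => (x i).1) ∧ Structure.RelMap r fun i => (x i).2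

/-- The interpretation of a closed term in an algebra. -/
def interp (A : Type u) [L.Structure A] (t : L.Term Empty) : A := t.realize Empty.elim

/-- A congruence of an `L`-structure: an equivalence relation compatible with all
basic operations. -/
structure Congruence (L : FirstOrder.Language.{v, w}) (A : Type u) [L.Structure A] where
  rel : A → A → Prop
  refl : ∀ a, rel a a
  symm : ∀ {a b}, rel a b → rel b a
  trans : ∀ {a b c}, rel a b → rel b c → rel a c
  compat : ∀ {n} (f : L.Functions n) (x y : Fin n → A),
    (∀ i, rel (x i) (y i)) → rel (Structure.funMap f x) (Structure.funMap f y)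

variable {A : Type u} [L.Structure A]

/-- `θ ⋄ θ* = Δ` : `θ ∩ θ* = Δ` and `θ ∘ θ* = ∇`. -/
def Complementary (θ θ' : Congruence L A) : Prop :=
  (∀ a b : A, θ.rel a b → θ'.rel a b → a = b) ∧ ∀ a b : A, ∃ c : A, θ.rel a c ∧ θ'.rel c b

/-- A factor congruence: the kernel of a projection onto a direct factor,
equivalently a congruence possessing a complementary factor congruence. -/
def IsFactorCongruence (θ : Congruence L A) : Prop := ∃ θ' : Congruence L A, Complementary θ θ'

/-- The meet of two congruences. -/
def Congruence.inf (θ φ : Congruence L A) : Congruence L A where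
  rel a b := θ.rel a b ∧ φ.rel a b
  refl a := ⟨θ.refl a, φ.refl a⟩
  symm h := ⟨θ.symm h.1, φ.symm h.2⟩
  trans h h' := ⟨θ.trans h.1 h'.1, φ.trans h.2 h'.2⟩
  compat f x y h := ⟨θ.compat f x y fun i => (h i).1, φ.compat f x y fun i => (h i).2⟩

/-- The order on congruences. -/
def Congruence.le (θ φ : Congruence L A) : Prop := ∀ a b : A, θ.rel a b → φ.rel a b

/-- The join of two congruences in the congruence lattice. -/
def Congruence.sup (θ φ : Congruence L A) : Congruence L A where
  rel a b := ∀ ψ : Congruence L A, θ.le ψ → φ.le ψ → ψ.rel a b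
  refl a ψ _ _ := ψ.refl a
  symm h ψ h1 h2 := ψ.symm (h ψ h1 h2)
  trans h h' ψ h1 h2 := ψ.trans (h ψ h1 h2) (h' ψ h1 h2)
  compat f x y h ψ h1 h2 := ψ.compat f x y fun i => h i ψ h1 h2

/-- A theory is equational when each axiom is a universally quantified equation. -/
def IsEquational (T : L.Theory) : Prop :=
  ∀ φ ∈ T, ∃ (n : ℕ) (t₁ t₂ : L.Term (Empty ⊕ Fin n)), φ = (t₁.bdEqual t₂).alls

/-- `Mod(T)` is a variety with `0⃗` & `1⃗`, witnessed by closed terms `z`, `o`. -/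
def HasZeroOne (T : L.Theory) {l : ℕ} (z o : Fin l → L.Term Empty) : Prop :=
  ∀ (A : Type u) [L.Structure A], A ⊨ T → Nonempty A →
    (∀ i, interp A (z i) = interp A (o i)) → ∀ x y : A, x = y

variable {l : ℕ} (z o : Fin l → L.Term Empty)

/-- `0⃗ θ e⃗ θ* 1⃗`. -/
def Between (θ θ' : Congruence L A) (e : Fin l → A) : Prop :=
  (∀ i, θ.rel (interp A (z i)) (e i)) ∧ ∀ i, θ'.rel (e i) (interp A (o i))

/-- `e⃗` is a central element of `A`. -/
def IsCentral (e : Fin l → A) : Prop :=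
  ∃ (A₁ : Type u) (A₂ : Type u) (_ : L.Structure A₁) (_ : L.Structure A₂)
    (g : A ≃[L] A₁ × A₂), ∀ i, g (e i) = (interp A₁ (z i), interp A₂ (o i))

/-- `e⃗` and `f⃗` are complementary central elements of `A`. -/
def AreComplementaryCentral (e f : Fin l → A) : Prop :=
  ∃ (A₁ : Type u) (A₂ : Type u) (_ : L.Structure A₁) (_ : L.Structure A₂)
    (g : A ≃[L] A₁ × A₂),
      (∀ i, g (e i) = (interp A₁ (z i), interp A₂ (o i))) ∧
      (∀ i, g (f i) = (interp A₁ (o i), interp A₂ (z i)))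

variable (T : L.Theory)

/-- The Determining Property. -/
def HasDeterminingProperty : Prop :=
  ∀ (A : Type u) [L.Structure A], A ⊨ T → Nonempty A →
    (∀ θ θ' : Congruence L A, Complementary θ θ' → ∃! e : Fin l → A, Between z o θ θ' e) ∧
    (∀ (θ θ' : Congruence L A) (e : Fin l → A), Complementary θ θ' → Between z o θ θ' e →
      IsCentral z o e) ∧
    (∀ e : Fin l → A, IsCentral z o e →
      ∃! p : Congruence L A × Congruence L A, Complementary p.1 p.2 ∧ Between z o p.1 p.2 e)

/-- The Weak Determining Property. -/
def HasWeakDeterminingProperty : Prop :=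
  ∀ (A : Type u) [L.Structure A], A ⊨ T → Nonempty A →
    (∀ θ θ' : Congruence L A, Complementary θ θ' →
      ∃! p : (Fin l → A) × (Fin l → A), Between z o θ θ' p.1 ∧ Between o z θ θ' p.2) ∧
    (∀ (θ θ' : Congruence L A) (e f : Fin l → A), Complementary θ θ' →
      Between z o θ θ' e → Between o z θ θ' f → AreComplementaryCentral z o e f) ∧
    (∀ e f : Fin l → A, AreComplementaryCentral z o e f →
      ∃! p : Congruence L A × Congruence L A,
        Complementary p.1 p.2 ∧ Between z o p.1 p.2 e ∧ Between o z p.1 p.2 f)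

/-- Definable Factor Congruences. -/
def HasDFC : Prop :=
  ∃ Φ : L.Formula (Fin 2 ⊕ Fin l),
    ∀ (A : Type u) (B : Type u) [L.Structure A] [L.Structure B],
      A ⊨ T → B ⊨ T → Nonempty A → Nonempty B →
        ∀ (a c : A) (b d : B),
          Φ.Realize (Sum.elim (![((a, b) : A × B), (c, d)])
            fun i => ((interp A (z i), interp B (o i)) : A × B)) ↔ a = c

/-- Definability with both `[0⃗,1⃗]` and `[1⃗,0⃗]` as parameters. -/
def HasDFC' : Prop :=
  ∃ Φ : L.Formula (Fin 2 ⊕ (Fin l ⊕ Fin l)),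
    ∀ (A : Type u) (B : Type u) [L.Structure A] [L.Structure B],
      A ⊨ T → B ⊨ T → Nonempty A → Nonempty B →
        ∀ (a c : A) (b d : B),
          Φ.Realize (Sum.elim (![((a, b) : A × B), (c, d)])
            (Sum.elim (fun i => ((interp A (z i), interp B (o i)) : A × B))
              fun i => ((interp A (o i), interp B (z i)) : A × B))) ↔ a = c

/-- Boolean Factor Congruences. -/
def HasBFC : Prop :=
  ∀ (A : Type u) [L.Structure A], A ⊨ T → Nonempty A →
    (∀ θ φ : Congruence L A, IsFactorCongruence θ → IsFactorCongruence φ →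
      IsFactorCongruence (θ.inf φ) ∧ IsFactorCongruence (θ.sup φ)) ∧
    (∀ θ φ ψ : Congruence L A, IsFactorCongruence θ → IsFactorCongruence φ →
      IsFactorCongruence ψ →
        (θ.inf (φ.sup ψ)).rel = ((θ.inf φ).sup (θ.inf ψ)).rel)

end Paper
namespace Paper

section Aux

variable {L : FirstOrder.Language.{v, w}}

/-- Terms are realized componentwise in a product structure. -/
lemma term_realize_prod {A : Type u} {B : Type u} [L.Structure A] [L.Structure B]
    {γ : Type*} (t : L.Term γ) (v : γ → A × B) :
    t.realize v = (t.realize fun g => (v g).1, t.realize fun g => (v g).2) := by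
  induction t with
  | var g => rfl
  | func f ts ih =>
      show Structure.funMap f _ = _
      simp only [Term.realize]
      have h1 : (fun i => (ts i).realize v) = fun i => ((ts i).realize (fun g => (v g).1),
          (ts i).realize (fun g => (v g).2)) := funext fun i => ih i
      rw [h1]
      rfl

lemma interp_prod {A : Type u} {B : Type u} [L.Structure A] [L.Structure B]
    (t : L.Term Empty) :
    interp (A × B) t = (interp A t, interp B t) := by
  unfold interp
  rw [term_realize_prod]
  have h1 : (fun g : Empty => (Empty.elim g : A × B).1) = Empty.elim := funext fun g => g.elim
  have h2 : (fun g : Empty => (Empty.elim g : A × B).2) = Empty.elim := funext fun g => g.elim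
  congr 1
  · exact congrArg (fun v : Empty → A => t.realize v) (funext fun g => g.elim)
  · exact congrArg (fun v : Empty → B => t.realize v) (funext fun g => g.elim)

lemma prod_model {A : Type u} {B : Type u} [L.Structure A] [L.Structure B]
    {T : L.Theory} (hT : IsEquational T) (hA : A ⊨ T) (hB : B ⊨ T) :
    (A × B) ⊨ T := by
  refine ⟨fun {φ} hφ => ?_⟩
  obtain ⟨n, t₁, t₂, rfl⟩ := hT φ hφ
  have h1 := Theory.realize_sentence_of_mem (M := A) T hφ
  have h2 := Theory.realize_sentence_of_mem (M := B) T hφ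
  rw [Sentence.Realize, BoundedFormula.realize_alls] at h1 h2 ⊢
  intro xs
  replace h1 := h1 fun i => (xs i).1
  replace h2 := h2 fun i => (xs i).2
  rw [BoundedFormula.realize_bdEqual] at h1 h2 ⊢
  rw [term_realize_prod, term_realize_prod]
  have hf : (fun g => ((Sum.elim (default : Empty → A × B) xs) g).1)
      = Sum.elim (default : Empty → A) (fun i => (xs i).1) := by
    funext g; cases g with
    | inl e => exact e.elim
    | inr i => rfl
  have hs : (fun g => ((Sum.elim (default : Empty → A × B) xs) g).2)
      = Sum.elim (default : Empty → B) (fun i => (xs i).2) := by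
    funext g; cases g with
    | inl e => exact e.elim
    | inr i => rfl
  rw [hf, hs, h1, h2]

end Aux

end Paper
namespace Paper

section Dec

variable {L : FirstOrder.Language.{v, w}} {A : Type u} [L.Structure A]
variable {θ θ' : Congruence L A}

/-- The decomposition operation of a complementary pair: `a θ (dec a b) θ' b`. -/
noncomputable def dec (hc : Complementary θ θ') (a b : A) : A := (hc.2 a b).choose

lemma dec_left (hc : Complementary θ θ') (a b : A) : θ.rel a (dec hc a b) :=
  (hc.2 a b).choose_spec.1

lemma dec_right (hc : Complementary θ θ') (a b : A) : θ'.rel (dec hc a b) b :=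
  (hc.2 a b).choose_spec.2

lemma dec_unique (hc : Complementary θ θ') {a b c : A}
    (h1 : θ.rel a c) (h2 : θ'.rel c b) : c = dec hc a b :=
  hc.1 c (dec hc a b) (θ.trans (θ.symm h1) (dec_left hc a b))
    (θ'.trans h2 (θ'.symm (dec_right hc a b)))

lemma dec_self (hc : Complementary θ θ') (a : A) : dec hc a a = a :=
  (dec_unique hc (θ.refl a) (θ'.refl a)).symm

/-- If `a θ b` then `dec a b = b`. -/
lemma dec_of_rel (hc : Complementary θ θ') {a b : A} (h : θ.rel a b) : dec hc a b = b :=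
  (dec_unique hc h (θ'.refl b)).symm

lemma dec_dec_right (hc : Complementary θ θ') (a u v : A) :
    dec hc a (dec hc u v) = dec hc a v :=
  (dec_unique hc (dec_left hc a v)
    (θ'.trans (dec_right hc a v) (θ'.symm (dec_right hc u v)))).symm

lemma dec_dec_left (hc : Complementary θ θ') (u v b : A) :
    dec hc (dec hc u v) b = dec hc u b :=
  (dec_unique hc (θ.trans (θ.symm (dec_left hc u v)) (dec_left hc u b))
    (dec_right hc u b)).symm

/-- The decomposition operation is a homomorphism. -/
lemma dec_funMap (hc : Complementary θ θ') {n : ℕ} (f : L.Functions n) (a b : Fin n → A) :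
    Structure.funMap f (fun i => dec hc (a i) (b i)) =
      dec hc (Structure.funMap f a) (Structure.funMap f b) :=
  dec_unique hc (θ.compat f a _ fun i => dec_left hc (a i) (b i))
    (θ'.compat f _ b fun i => dec_right hc (a i) (b i))

/-- `dec` is involutive in the appropriate sense. -/
lemma dec_dec_sym (hc : Complementary θ θ') (a b : A) :
    dec hc (dec hc a b) (dec hc b a) = a :=
  (dec_unique hc (θ.symm (dec_left hc a b)) (θ'.symm (dec_right hc b a))).symm

/-- `ρ` is compatible with the decomposition operation of the pair `(θ, θ')`. -/
def DecCompat (hc : Complementary θ θ') (ρ : Congruence L A) : Prop :=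
  ∀ a b c d : A, ρ.rel a b → ρ.rel c d → ρ.rel (dec hc a c) (dec hc b d)

lemma decCompat_self (hc : Complementary θ θ') : DecCompat hc θ := fun a b c _ hab _ =>
  θ.trans (θ.symm (dec_left hc a c)) (θ.trans hab (dec_left hc b _))

lemma decCompat_inf (hc : Complementary θ θ') {ρ σ : Congruence L A}
    (hρ : DecCompat hc ρ) (hσ : DecCompat hc σ) : DecCompat hc (ρ.inf σ) :=
  fun a b c d h h' => ⟨hρ a b c d h.1 h'.1, hσ a b c d h.2 h'.2⟩

end Dec

end Paper
namespace Paper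

section Key

variable {L : FirstOrder.Language.{v, w}} {A : Type u} [L.Structure A]
variable {θ θ' : Congruence L A}

/-- The "rectangle" congruence `ρ ⊠ σ` on `A × A`. -/
def boxCong (ρ σ : Congruence L A) : Congruence L (A × A) where
  rel u v := ρ.rel u.1 v.1 ∧ σ.rel u.2 v.2
  refl u := ⟨ρ.refl u.1, σ.refl u.2⟩
  symm h := ⟨ρ.symm h.1, σ.symm h.2⟩
  trans h h' := ⟨ρ.trans h.1 h'.1, σ.trans h.2 h'.2⟩
  compat f x y h := ⟨ρ.compat f _ _ fun i => (h i).1, σ.compat f _ _ fun i => (h i).2⟩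

/-- The partial swap of `A × A` along the pair `(θ, θ')`. -/
noncomputable def Mdec (hc : Complementary θ θ') (u : A × A) : A × A :=
  (dec hc u.1 u.2, dec hc u.2 u.1)

lemma Mdec_invol (hc : Complementary θ θ') (u : A × A) : Mdec hc (Mdec hc u) = u := by
  unfold Mdec
  exact Prod.ext (dec_dec_sym hc u.1 u.2) (dec_dec_sym hc u.2 u.1)

lemma Mdec_diag (hc : Complementary θ θ') (a : A) : Mdec hc (a, a) = (a, a) := by
  unfold Mdec
  simp [dec_self]

lemma Mdec_funMap (hc : Complementary θ θ') {n : ℕ} (f : L.Functions n) (x : Fin n → A × A) :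
    Mdec hc (Structure.funMap f x) = Structure.funMap f fun i => Mdec hc (x i) := by
  refine Prod.ext ?_ ?_
  · exact (dec_funMap hc f (fun i => (x i).1) (fun i => (x i).2)).symm
  · exact (dec_funMap hc f (fun i => (x i).2) (fun i => (x i).1)).symm

/-- Conjugation of a congruence on `A × A` by the partial swap `Mdec`. -/
noncomputable def conjCong (hc : Complementary θ θ') (Ψ : Congruence L (A × A)) :
    Congruence L (A × A) where
  rel u v := Ψ.rel (Mdec hc u) (Mdec hc v)
  refl u := Ψ.refl _
  symm h := Ψ.symm h
  trans h h' := Ψ.trans h h'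
  compat f x y h := by
    have hx := Mdec_funMap hc f x
    have hy := Mdec_funMap hc f y
    show Ψ.rel (Mdec hc (Structure.funMap f x)) (Mdec hc (Structure.funMap f y))
    rw [hx, hy]
    exact Ψ.compat f _ _ h

variable {l : ℕ} {z o : Fin l → L.Term Empty} {T : L.Theory}

/-- The crucial consequence of the Determining Property: the decomposition operation of any
complementary pair preserves any other complementary pair (interchange/uniformity). -/
lemma key_decCompat (hT : IsEquational T) (hD : HasDeterminingProperty.{u} z o T)
    (hA : A ⊨ T) (hne : Nonempty A)
    (hθ : Complementary θ θ') {φ φ' : Congruence L A} (hφ : Complementary φ φ') :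
    DecCompat hθ φ ∧ DecCompat hθ φ' := by
  obtain ⟨e, he, -⟩ := (hD A hA hne).1 φ φ' hφ
  have hAA : (A × A) ⊨ T := prod_model hT hA hA
  have hneAA : Nonempty (A × A) := ⟨(Classical.arbitrary A, Classical.arbitrary A)⟩
  set Θ : Congruence L (A × A) := boxCong φ φ with hΘdef
  set Θ' : Congruence L (A × A) := boxCong φ' φ' with hΘ'def
  have hcomp : Complementary Θ Θ' := by
    constructor
    · rintro u v ⟨h1, h2⟩ ⟨h1', h2'⟩
      exact Prod.ext (hφ.1 _ _ h1 h1') (hφ.1 _ _ h2 h2')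
    · intro u v
      obtain ⟨c1, hc1, hc1'⟩ := hφ.2 u.1 v.1
      obtain ⟨c2, hc2, hc2'⟩ := hφ.2 u.2 v.2
      exact ⟨(c1, c2), ⟨hc1, hc2⟩, ⟨hc1', hc2'⟩⟩
  set E : Fin l → A × A := fun i => (e i, e i) with hEdef
  have hbet : Between z o Θ Θ' E := by
    constructor
    · intro i
      rw [interp_prod]
      exact ⟨he.1 i, he.1 i⟩
    · intro i
      rw [interp_prod]
      exact ⟨he.2 i, he.2 i⟩
  set ΘM : Congruence L (A × A) := conjCong hθ Θ with hMdef
  set Θ'M : Congruence L (A × A) := conjCong hθ Θ' with hM'def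
  have hcompM : Complementary ΘM Θ'M := by
    constructor
    · intro u v h h'
      have := hcomp.1 _ _ h h'
      have h2 := congrArg (Mdec hθ) this
      rwa [Mdec_invol, Mdec_invol] at h2
    · intro u v
      obtain ⟨c, hc1, hc2⟩ := hcomp.2 (Mdec hθ u) (Mdec hθ v)
      refine ⟨Mdec hθ c, ?_, ?_⟩
      · show Θ.rel (Mdec hθ u) (Mdec hθ (Mdec hθ c))
        rwa [Mdec_invol]
      · show Θ'.rel (Mdec hθ (Mdec hθ c)) (Mdec hθ v)
        rwa [Mdec_invol]
  have hbetM : Between z o ΘM Θ'M E := by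
    constructor
    · intro i
      show Θ.rel (Mdec hθ (interp (A × A) (z i))) (Mdec hθ (E i))
      rw [interp_prod, hEdef]
      rw [Mdec_diag, Mdec_diag]
      exact ⟨he.1 i, he.1 i⟩
    · intro i
      show Θ'.rel (Mdec hθ (E i)) (Mdec hθ (interp (A × A) (o i)))
      rw [interp_prod, hEdef]
      rw [Mdec_diag, Mdec_diag]
      exact ⟨he.2 i, he.2 i⟩
  have hcent : IsCentral z o E := (hD (A × A) hAA hneAA).2.1 Θ Θ' E hcomp hbet
  have huniq := (hD (A × A) hAA hneAA).2.2 E hcent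
  have heq : ((Θ, Θ') : Congruence L (A × A) × Congruence L (A × A)) = (ΘM, Θ'M) :=
    huniq.unique ⟨hcomp, hbet⟩ ⟨hcompM, hbetM⟩
  have heq1 : Θ = ΘM := congrArg Prod.fst heq
  have heq2 : Θ' = Θ'M := congrArg Prod.snd heq
  constructor
  · intro a b c d hab hcd
    have h : Θ.rel (a, c) (b, d) := ⟨hab, hcd⟩
    rw [heq1] at h
    exact h.1
  · intro a b c d hab hcd
    have h : Θ'.rel (a, c) (b, d) := ⟨hab, hcd⟩
    rw [heq2] at h
    exact h.1

end Key

end Paper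
namespace Paper

section Chain

variable {L : FirstOrder.Language.{v, w}} {A : Type u} [L.Structure A]
variable {θ θ' ρ σ : Congruence L A}

/-- The join of two congruences as a reflexive-transitive closure. -/
def crel (ρ σ : Congruence L A) : A → A → Prop :=
  Relation.ReflTransGen fun a b => ρ.rel a b ∨ σ.rel a b

lemma crel_of_left {a b : A} (h : ρ.rel a b) : crel ρ σ a b :=
  Relation.ReflTransGen.single (Or.inl h)

lemma crel_of_right {a b : A} (h : σ.rel a b) : crel ρ σ a b :=
  Relation.ReflTransGen.single (Or.inr h)

lemma crel_symm {a b : A} (h : crel ρ σ a b) : crel ρ σ b a := by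
  induction h with
  | refl => exact Relation.ReflTransGen.refl
  | tail _ hstep ih =>
      exact Relation.ReflTransGen.trans
        (Relation.ReflTransGen.single (hstep.imp ρ.symm σ.symm)) ih

lemma crel_funMap_update {n : ℕ} (f : L.Functions n) (x : Fin n → A) (j : Fin n) {b : A}
    (h : crel ρ σ (x j) b) :
    crel ρ σ (Structure.funMap f x) (Structure.funMap f (Function.update x j b)) := by
  induction h with
  | refl =>
      rw [Function.update_eq_self]
      exact Relation.ReflTransGen.refl
  | @tail c b' _ hstep ih =>
      refine ih.trans (Relation.ReflTransGen.single ?_)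
      have hupd : Function.update x j b' =
          Function.update (Function.update x j c) j b' := by
        rw [Function.update_idem]
      rw [hupd]
      have key : ∀ τ : Congruence L A, τ.rel c b' →
          τ.rel (Structure.funMap f (Function.update x j c))
            (Structure.funMap f (Function.update (Function.update x j c) j b')) := by
        intro τ hτ
        apply τ.compat
        intro i
        by_cases hij : i = j
        · subst hij; simpa using hτ
        · simp only [Function.update_of_ne hij]
          exact τ.refl _
      exact hstep.imp (key ρ) (key σ)

lemma crel_funMap {n : ℕ} (f : L.Functions n) (x y : Fin n → A)
    (h : ∀ i, crel ρ σ (x i) (y i)) :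
    crel ρ σ (Structure.funMap f x) (Structure.funMap f y) := by
  have key : ∀ k : ℕ, crel ρ σ (Structure.funMap f x)
      (Structure.funMap f fun i => if (i : ℕ) < k then y i else x i) := by
    intro k
    induction k with
    | zero =>
        have hz : (fun i : Fin n => if (i : ℕ) < 0 then y i else x i) = x :=
          funext fun i => if_neg (Nat.not_lt_zero _)
        rw [hz]
        exact Relation.ReflTransGen.refl
    | succ k ih =>
        by_cases hk : k < n
        · have hupd : (fun i : Fin n => if (i : ℕ) < k + 1 then y i else x i) =
              Function.update (fun i : Fin n => if (i : ℕ) < k then y i else x i)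
                ⟨k, hk⟩ (y ⟨k, hk⟩) := by
            funext i
            by_cases hij : i = ⟨k, hk⟩
            · subst hij; simp
            · have hik : (i : ℕ) ≠ k := fun hc => hij (Fin.ext hc)
              rw [Function.update_of_ne hij]
              by_cases h2 : (i : ℕ) < k
              · rw [if_pos h2, if_pos (Nat.lt_succ_of_lt h2)]
              · rw [if_neg h2, if_neg (by omega)]
          rw [hupd]
          refine ih.trans ?_
          apply crel_funMap_update
          have hval : (if (k : ℕ) < k then y ⟨k, hk⟩ else x ⟨k, hk⟩) = x ⟨k, hk⟩ :=
            if_neg (lt_irrefl _)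
          show crel ρ σ (if ((⟨k, hk⟩ : Fin n) : ℕ) < k then y ⟨k, hk⟩ else x ⟨k, hk⟩) _
          rw [hval]
          exact h ⟨k, hk⟩
        · have heq : (fun i : Fin n => if (i : ℕ) < k + 1 then y i else x i) =
              (fun i : Fin n => if (i : ℕ) < k then y i else x i) := by
            funext i
            have h1 : (i : ℕ) < k := lt_of_lt_of_le i.isLt (le_of_not_gt hk)
            rw [if_pos h1, if_pos (Nat.lt_succ_of_lt h1)]
          rw [heq]
          exact ih
  have hy : (fun i : Fin n => if (i : ℕ) < n then y i else x i) = y :=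
    funext fun i => if_pos i.isLt
  have := key n
  rwa [hy] at this

/-- The chain closure as a congruence. -/
def crelCong (ρ σ : Congruence L A) : Congruence L A where
  rel := crel ρ σ
  refl _ := Relation.ReflTransGen.refl
  symm := crel_symm
  trans := Relation.ReflTransGen.trans
  compat f x y h := crel_funMap f x y h

lemma sup_rel_iff {a b : A} : (ρ.sup σ).rel a b ↔ crel ρ σ a b := by
  constructor
  · intro h
    exact h (crelCong ρ σ) (fun _ _ => crel_of_left) (fun _ _ => crel_of_right)
  · intro h ψ h1 h2
    induction h with
    | refl => exact ψ.refl _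
    | tail _ hstep ih => exact ψ.trans ih (hstep.elim (h1 _ _) (h2 _ _))

lemma decCompat_sup {hc : Complementary θ θ'}
    (hρ : DecCompat hc ρ) (hσ : DecCompat hc σ) : DecCompat hc (ρ.sup σ) := by
  intro a b c d hab hcd
  rw [sup_rel_iff] at hab hcd ⊢
  have step1 : ∀ u v w : A, crel ρ σ u v → crel ρ σ (dec hc u w) (dec hc v w) := by
    intro u v w huv
    induction huv with
    | refl => exact Relation.ReflTransGen.refl
    | tail _ hstep ih =>
        refine ih.trans (Relation.ReflTransGen.single ?_)
        exact hstep.imp (fun hs => hρ _ _ _ _ hs (ρ.refl w)) (fun hs => hσ _ _ _ _ hs (σ.refl w))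
  have step2 : ∀ u v w : A, crel ρ σ v w → crel ρ σ (dec hc u v) (dec hc u w) := by
    intro u v w hvw
    induction hvw with
    | refl => exact Relation.ReflTransGen.refl
    | tail _ hstep ih =>
        refine ih.trans (Relation.ReflTransGen.single ?_)
        exact hstep.imp (fun hs => hρ _ _ _ _ (ρ.refl u) hs) (fun hs => hσ _ _ _ _ (σ.refl u) hs)
  exact (step1 a b c hab).trans (step2 b c d hcd)

end Chain

end Paper
namespace Paper

section Lattice

variable {L : FirstOrder.Language.{v, w}} {A : Type u} [L.Structure A]
variable {θ θ' φ φ' ψ ψ' : Congruence L A}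

/-- The congruence `{(x,y) : dec y x ρ y}` (the "`θ*`-side part" of `ρ`). -/
noncomputable def xiCong (hc : Complementary θ θ') (ρ : Congruence L A)
    (hρ : DecCompat hc ρ) : Congruence L A where
  rel x y := ρ.rel (dec hc y x) y
  refl a := by show ρ.rel (dec hc a a) a; rw [dec_self]; exact ρ.refl a
  symm {x y} h := by
    have h1 := hρ x x (dec hc y x) y (ρ.refl x) h
    rw [dec_dec_right, dec_self] at h1
    exact ρ.symm h1
  trans {x y w} h h' := by
    have h1 := hρ w w (dec hc y x) y (ρ.refl w) h
    rw [dec_dec_right] at h1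
    exact ρ.trans h1 h'
  compat f x y h := by
    show ρ.rel (dec hc (Structure.funMap f y) (Structure.funMap f x)) (Structure.funMap f y)
    rw [← dec_funMap]
    exact ρ.compat f _ _ h

/-- The congruence `{(x,y) : dec x y ρ y}` (the "`θ`-side part" of `ρ`). -/
noncomputable def alCong (hc : Complementary θ θ') (ρ : Congruence L A)
    (hρ : DecCompat hc ρ) : Congruence L A where
  rel x y := ρ.rel (dec hc x y) y
  refl a := by show ρ.rel (dec hc a a) a; rw [dec_self]; exact ρ.refl a
  symm {x y} h := by
    have h1 := hρ y (dec hc x y) x x (ρ.symm h) (ρ.refl x)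
    rw [dec_dec_left, dec_self] at h1
    exact h1
  trans {x y w} h h' := by
    have h1 := hρ (dec hc x y) y w w h (ρ.refl w)
    rw [dec_dec_left] at h1
    exact ρ.trans h1 h'
  compat f x y h := by
    show ρ.rel (dec hc (Structure.funMap f x) (Structure.funMap f y)) (Structure.funMap f y)
    rw [← dec_funMap]
    exact ρ.compat f _ _ h

/-- The meet of two factor congruences is a factor congruence. -/
lemma isFactor_inf (hθ : Complementary θ θ') (hφ : Complementary φ φ')
    (hcφ : DecCompat hθ φ) (hcφ' : DecCompat hθ φ') :
    IsFactorCongruence (θ.inf φ) := by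
  refine ⟨xiCong hθ φ' hcφ', ?_, ?_⟩
  · rintro a b ⟨habθ, habφ⟩ hxi
    have hba : dec hθ b a = a := dec_of_rel hθ (θ.symm habθ)
    have hxi' : φ'.rel (dec hθ b a) b := hxi
    rw [hba] at hxi'
    exact hφ.1 a b habφ hxi'
  · intro x y
    refine ⟨dec hθ x (dec hφ x y), ⟨dec_left hθ _ _, ?_⟩, ?_⟩
    · have h1 := hcφ x x x (dec hφ x y) (φ.refl x) (dec_left hφ x y)
      rwa [dec_self] at h1
    · show φ'.rel (dec hθ y (dec hθ x (dec hφ x y))) y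
      rw [dec_dec_right]
      have h1 := hcφ' y y (dec hφ x y) y (φ'.refl y) (dec_right hφ x y)
      rwa [dec_self] at h1

lemma le_sup_left' {a b : A} (h : θ.rel a b) : (θ.sup φ).rel a b :=
  fun _ h1 _ => h1 _ _ h

lemma le_sup_right' {a b : A} (h : φ.rel a b) : (θ.sup φ).rel a b :=
  fun _ _ h2 => h2 _ _ h

lemma sup_rel_iff_al (hθ : Complementary θ θ') (hcφ : DecCompat hθ φ) {a b : A} :
    (θ.sup φ).rel a b ↔ φ.rel (dec hθ a b) b := by
  constructor
  · intro h
    refine h (alCong hθ φ hcφ) ?_ ?_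
    · intro u v huv
      show φ.rel (dec hθ u v) v
      rw [dec_of_rel hθ huv]
      exact φ.refl v
    · intro u v huv
      show φ.rel (dec hθ u v) v
      have h1 := hcφ u v v v huv (φ.refl v)
      rwa [dec_self] at h1
  · intro h ξ h1 h2
    exact ξ.trans (h1 _ _ (dec_left hθ a b)) (h2 _ _ h)

/-- The join of two factor congruences is a factor congruence. -/
lemma isFactor_sup (hθ : Complementary θ θ') (hφ : Complementary φ φ')
    (hcφ : DecCompat hθ φ) (hcφ' : DecCompat hθ φ') :
    IsFactorCongruence (θ.sup φ) := by
  refine ⟨θ'.inf (alCong hθ φ' hcφ'), ?_, ?_⟩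
  · rintro a b hsup ⟨habθ', hal⟩
    have h1 : φ.rel (dec hθ a b) b := (sup_rel_iff_al hθ hcφ).1 hsup
    have h2 : φ'.rel (dec hθ a b) b := hal
    have h3 : dec hθ a b = b := hφ.1 _ _ h1 h2
    have h4 : θ.rel a b := by
      have := dec_left hθ a b
      rwa [h3] at this
    exact hθ.1 a b h4 habθ'
  · intro x y
    refine ⟨dec hθ (dec hφ x y) y, ?_, ?_, ?_⟩
    · rw [sup_rel_iff_al hθ hcφ]
      rw [dec_dec_right]
      exact hcφ x (dec hφ x y) y y (dec_left hφ x y) (φ.refl y)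
    · exact dec_right hθ _ _
    · show φ'.rel (dec hθ (dec hθ (dec hφ x y) y) y) y
      rw [dec_dec_left]
      have h1 := hcφ' (dec hφ x y) y y y (dec_right hφ x y) (φ'.refl y)
      rwa [dec_self] at h1

/-- Distributivity. -/
lemma distrib_rel (hθ : Complementary θ θ')
    (hcφ : DecCompat hθ φ) (hcψ : DecCompat hθ ψ) :
    (θ.inf (φ.sup ψ)).rel = ((θ.inf φ).sup (θ.inf ψ)).rel := by
  funext a b
  apply propext
  constructor
  · rintro ⟨habθ, hsup⟩
    set R : Congruence L A := (θ.inf φ).sup (θ.inf ψ) with hRdef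
    have hRc : DecCompat hθ R :=
      decCompat_sup (decCompat_inf hθ (decCompat_self hθ) hcφ)
        (decCompat_inf hθ (decCompat_self hθ) hcψ)
    have hXi : ∀ (τ : Congruence L A), DecCompat hθ τ → τ.le R →
        ∀ u v, τ.rel u v → (xiCong hθ R hRc).rel u v := by
      intro τ hτc hτle u v huv
      show R.rel (dec hθ v u) v
      refine hτle _ _ ?_
      have h1 := hτc v v u v (τ.refl v) huv
      rwa [dec_self] at h1
    have hφXi : φ.le (xiCong hθ R hRc) := by
      intro u v huv
      show R.rel (dec hθ v u) v
      have hθpart : θ.rel (dec hθ v u) v := θ.symm (dec_left hθ v u)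
      have hφpart : φ.rel (dec hθ v u) v := by
        have h1 := hcφ v v u v (φ.refl v) huv
        rwa [dec_self] at h1
      exact le_sup_left' ⟨hθpart, hφpart⟩
    have hψXi : ψ.le (xiCong hθ R hRc) := by
      intro u v huv
      show R.rel (dec hθ v u) v
      have hθpart : θ.rel (dec hθ v u) v := θ.symm (dec_left hθ v u)
      have hψpart : ψ.rel (dec hθ v u) v := by
        have h1 := hcψ v v u v (ψ.refl v) huv
        rwa [dec_self] at h1
      exact le_sup_right' ⟨hθpart, hψpart⟩
    have hx : (xiCong hθ R hRc).rel a b := hsup _ hφXi hψXi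
    have hab : R.rel (dec hθ b a) b := hx
    rwa [dec_of_rel hθ (θ.symm habθ)] at hab
  · intro h
    refine h (θ.inf (φ.sup ψ)) ?_ ?_
    · rintro u v ⟨h1, h2⟩
      exact ⟨h1, le_sup_left' h2⟩
    · rintro u v ⟨h1, h2⟩
      exact ⟨h1, le_sup_right' h2⟩

end Lattice

end Paper

/-- **Theorem (2)⇒(5) of the Main Theorem.** If a variety with `0⃗` & `1⃗` has the
Determining Property then it has Boolean Factor Congruences. -/
theorem determiningProperty_hasBFC {L : FirstOrder.Language.{v, w}}
    (T : L.Theory) (hT : Paper.IsEquational T) {l : ℕ} (z o : Fin l → L.Term Empty)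
    (h01 : Paper.HasZeroOne.{u} T z o)
    (hD : Paper.HasDeterminingProperty.{u} z o T) :
    Paper.HasBFC.{u} T := by
  intro A _ hA hne
  constructor
  · rintro θ φ ⟨θ', hθ⟩ ⟨φ', hφ⟩
    obtain ⟨hcφ, hcφ'⟩ := Paper.key_decCompat hT hD hA hne hθ hφ
    exact ⟨Paper.isFactor_inf hθ hφ hcφ hcφ', Paper.isFactor_sup hθ hφ hcφ hcφ'⟩
  · rintro θ φ ψ ⟨θ', hθ⟩ ⟨φ', hφ⟩ ⟨ψ', hψ⟩
    obtain ⟨hcφ, -⟩ := Paper.key_decCompat hT hD hA hne hθ hφ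
    obtain ⟨hcψ, -⟩ := Paper.key_decCompat hT hD hA hne hθ hψ
    exact Paper.distrib_rel hθ hcφ hcψ
end

section
/- The variety V_L is a variety with 0⃗ & 1⃗ that does not have Definable Factor Congruences: there is no first-order formula Φ(x,y,z) in the language {+,*,0,1} such that for all A, B ∈ V_L, a,c ∈ A and b,d ∈ B, A×B ⊨ Φ(⟨a,b⟩,⟨c,d⟩,(0,1)) if and only if a = c. Equivalently, V_L does not have Boolean Factor Congruences. -/
open FirstOrder Language

universe u v w

namespace Paper

/-- The function symbols `{+, *, 0, 1}` of the language of `V_L`. -/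
inductive LFn : ℕ → Type
  | add : LFn 2
  | mul : LFn 2
  | zero : LFn 0
  | one : LFn 0

/-- The language `{+, *, 0, 1}`. -/
def LL : FirstOrder.Language := ⟨LFn, fun _ => Empty⟩

/-- The variable `x`. -/
def xT : LL.Term (Empty ⊕ Fin 1) := Term.var (Sum.inr 0)

/-- The closed term `0`. -/
def zeroT {α : Type*} : LL.Term α := Term.func LFn.zero ![]

/-- The closed term `1`. -/
def oneT {α : Type*} : LL.Term α := Term.func LFn.one ![]

/-- `t + u`. -/
def addT {α : Type*} (t u : LL.Term α) : LL.Term α := Term.func LFn.add ![t, u]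

/-- `t * u`. -/
def mulT {α : Type*} (t u : LL.Term α) : LL.Term α := Term.func LFn.mul ![t, u]

/-- The theory of `V_L`: `x + 0 = x`, `x + 1 = x * 1`, `x * 0 = 0`. -/
def TL : LL.Theory :=
  {((addT xT zeroT).bdEqual xT).alls,
   ((addT xT oneT).bdEqual (mulT xT oneT)).alls,
   ((mulT xT zeroT).bdEqual zeroT).alls}

end Paper


namespace VLAux
open FirstOrder Language Paper

/-! ### Concrete algebras -/

def Aadd : Fin 4 → Fin 4 → Fin 4 := fun x y => if y = 0 then x else 0
def Badd : Fin 3 → Fin 3 → Fin 3 := fun x y => if y = 0 then x else if x = 2 then 2 else 0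
def Bmul : Fin 3 → Fin 3 → Fin 3 := fun x y => if y = 1 ∧ x = 2 then 2 else 0

instance instA : LL.Structure (Fin 4) where
  funMap {_} f x := match f with
    | .add => Aadd (x 0) (x 1)
    | .mul => 0
    | .zero => 0
    | .one => 1
  RelMap {_} r _ := r.elim

instance instB : LL.Structure (Fin 3) where
  funMap {_} f x := match f with
    | .add => Badd (x 0) (x 1)
    | .mul => Bmul (x 0) (x 1)
    | .zero => 0
    | .one => 1
  RelMap {_} r _ := r.elim

lemma modelA : (Fin 4) ⊨ TL := by
  rw [Theory.model_iff]
  intro φ hφ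
  simp only [TL, Set.mem_insert_iff, Set.mem_singleton_iff] at hφ
  rcases hφ with rfl | rfl | rfl <;>
    simp only [Sentence.Realize, BoundedFormula.realize_alls,
      BoundedFormula.realize_bdEqual] <;> decide

lemma modelB : (Fin 3) ⊨ TL := by
  rw [Theory.model_iff]
  intro φ hφ
  simp only [TL, Set.mem_insert_iff, Set.mem_singleton_iff] at hφ
  rcases hφ with rfl | rfl | rfl <;>
    simp only [Sentence.Realize, BoundedFormula.realize_alls,
      BoundedFormula.realize_bdEqual] <;> decide

abbrev C := Fin 4 × Fin 3

lemma modelC : C ⊨ TL := by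
  rw [Theory.model_iff]
  intro φ hφ
  simp only [TL, Set.mem_insert_iff, Set.mem_singleton_iff] at hφ
  rcases hφ with rfl | rfl | rfl <;>
    simp only [Sentence.Realize, BoundedFormula.realize_alls,
      BoundedFormula.realize_bdEqual] <;> decide

/-! ### The swap automorphism of `C` -/

def p : C := (2, 2)
def q : C := (3, 2)

def sw : C → C := fun x => if x = p then q else if x = q then p else x

lemma sw_invol : ∀ x, sw (sw x) = x := by decide

lemma sw_add : ∀ a b : C, sw (Aadd a.1 b.1, Badd a.2 b.2) =
    (Aadd (sw a).1 (sw b).1, Badd (sw a).2 (sw b).2) := by decide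

lemma sw_mul : ∀ a b : C, sw ((0 : Fin 4), Bmul a.2 b.2) =
    ((0 : Fin 4), Bmul (sw a).2 (sw b).2) := by decide

lemma sw_map_fun : ∀ {n} (f : LL.Functions n) (x : Fin n → C),
    sw (Structure.funMap f x) = Structure.funMap f (sw ∘ x) := by
  intro n f x
  cases f with
  | zero => exact (show sw ((0 : Fin 4), (0 : Fin 3)) = ((0 : Fin 4), (0 : Fin 3)) by decide)
  | one => exact (show sw ((1 : Fin 4), (1 : Fin 3)) = ((1 : Fin 4), (1 : Fin 3)) by decide)
  | add => exact sw_add (x 0) (x 1)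
  | mul => exact sw_mul (x 0) (x 1)

def sigma : C ≃[LL] C where
  toFun := sw
  invFun := sw
  left_inv := sw_invol
  right_inv := sw_invol
  map_fun' := fun f x => by exact sw_map_fun f x
  map_rel' := fun r _ => r.elim

end VLAux

namespace VLAux
open FirstOrder Language Paper

/-! ### Theory membership -/

lemma mem1 : ((addT xT zeroT).bdEqual xT).alls ∈ TL := by simp [TL]
lemma mem2 : ((addT xT oneT).bdEqual (mulT xT oneT)).alls ∈ TL := by simp [TL]
lemma mem3 : ((mulT xT zeroT).bdEqual zeroT).alls ∈ TL := by simp [TL]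

/-! ### `IsEquational` -/

lemma isEquational : IsEquational TL := by
  intro φ hφ
  simp only [TL, Set.mem_insert_iff, Set.mem_singleton_iff] at hφ
  rcases hφ with rfl | rfl | rfl
  · exact ⟨1, addT xT zeroT, xT, rfl⟩
  · exact ⟨1, addT xT oneT, mulT xT oneT, rfl⟩
  · exact ⟨1, mulT xT zeroT, zeroT, rfl⟩

/-! ### `HasZeroOne` -/

lemma realize_closed_zero {M : Type} [LL.Structure M] (v : Empty ⊕ Fin 1 → M) :
    Term.realize v (zeroT : LL.Term (Empty ⊕ Fin 1)) = interp M zeroT :=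
  congrArg (Structure.funMap (L := LL) (M := M) LFn.zero) (funext fun i => i.elim0)

lemma realize_closed_one {M : Type} [LL.Structure M] (v : Empty ⊕ Fin 1 → M) :
    Term.realize v (oneT : LL.Term (Empty ⊕ Fin 1)) = interp M oneT :=
  congrArg (Structure.funMap (L := LL) (M := M) LFn.one) (funext fun i => i.elim0)

lemma hasZeroOne : HasZeroOne.{0} TL ![zeroT] ![oneT] := by
  intro M _ hM _ h01 x y
  have hz1 : interp M zeroT = interp M oneT := by
    have h := h01 0
    simpa using h
  have hs : ∀ s ∈ TL, M ⊨ s := (Theory.model_iff (M := M) TL).mp hM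
  have e1 := hs _ mem1
  have e2 := hs _ mem2
  have e3 := hs _ mem3
  simp only [Sentence.Realize, BoundedFormula.realize_alls,
    BoundedFormula.realize_bdEqual] at e1 e2 e3
  -- key: every element equals `interp M zeroT`
  have key : ∀ t : M, t = interp M zeroT := by
    intro t
    set v : Empty ⊕ Fin 1 → M := Sum.elim default (fun _ => t) with hv
    have hone : Term.realize v (addT xT zeroT) = Term.realize v (addT xT oneT) := by
      show Structure.funMap (L := LL) (M := M) LFn.add (fun i => Term.realize v (![xT, zeroT] i)) =
        Structure.funMap (L := LL) (M := M) LFn.add (fun i => Term.realize v (![xT, oneT] i))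
      refine congrArg _ (funext fun i => ?_)
      fin_cases i
      · rfl
      · show Term.realize v (zeroT : LL.Term _) = Term.realize v (oneT : LL.Term _)
        rw [realize_closed_zero, realize_closed_one, hz1]
    have htwo : Term.realize v (mulT xT oneT) = Term.realize v (mulT xT zeroT) := by
      show Structure.funMap (L := LL) (M := M) LFn.mul (fun i => Term.realize v (![xT, oneT] i)) =
        Structure.funMap (L := LL) (M := M) LFn.mul (fun i => Term.realize v (![xT, zeroT] i))
      refine congrArg _ (funext fun i => ?_)
      fin_cases i
      · rfl
      · show Term.realize v (oneT : LL.Term _) = Term.realize v (zeroT : LL.Term _)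
        rw [realize_closed_zero, realize_closed_one, hz1]
    calc t = Term.realize v xT := rfl
    _ = Term.realize v (addT xT zeroT) := (e1 _).symm
    _ = Term.realize v (addT xT oneT) := hone
    _ = Term.realize v (mulT xT oneT) := e2 _
    _ = Term.realize v (mulT xT zeroT) := htwo
    _ = Term.realize v (zeroT : LL.Term _) := e3 _
    _ = interp M zeroT := realize_closed_zero v
  rw [key x, key y]

/-! ### Congruences on `C` -/

def th : Congruence LL C where
  rel x y := x.1 = y.1
  refl _ := rfl
  symm h := h.symm
  trans h h' := h.trans h'
  compat f x y h := by
    cases f with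
    | zero => rfl
    | one => rfl
    | add => exact (show Aadd (x 0).1 (x 1).1 = Aadd (y 0).1 (y 1).1 by rw [h 0, h 1])
    | mul => rfl

def thst : Congruence LL C where
  rel x y := x.2 = y.2
  refl _ := rfl
  symm h := h.symm
  trans h h' := h.trans h'
  compat f x y h := by
    cases f with
    | zero => rfl
    | one => rfl
    | add => exact (show Badd (x 0).2 (x 1).2 = Badd (y 0).2 (y 1).2 by rw [h 0, h 1])
    | mul => exact (show Bmul (x 0).2 (x 1).2 = Bmul (y 0).2 (y 1).2 by rw [h 0, h 1])

def th2 : Congruence LL C where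
  rel x y := (sw x).1 = (sw y).1
  refl _ := rfl
  symm h := h.symm
  trans h h' := h.trans h'
  compat f x y h := by
    have := th.compat f (sw ∘ x) (sw ∘ y) h
    show (sw (Structure.funMap f x)).1 = (sw (Structure.funMap f y)).1
    rw [sw_map_fun f x, sw_map_fun f y]
    exact this

def th2st : Congruence LL C where
  rel x y := (sw x).2 = (sw y).2
  refl _ := rfl
  symm h := h.symm
  trans h h' := h.trans h'
  compat f x y h := by
    have := thst.compat f (sw ∘ x) (sw ∘ y) h
    show (sw (Structure.funMap f x)).2 = (sw (Structure.funMap f y)).2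
    rw [sw_map_fun f x, sw_map_fun f y]
    exact this

def diag : Congruence LL C where
  rel x y := x = y
  refl _ := rfl
  symm h := h.symm
  trans h h' := h.trans h'
  compat f x y h := congrArg (Structure.funMap f) (funext h)

lemma fc_th : IsFactorCongruence th := by
  refine ⟨thst, fun a b h1 h2 => Prod.ext h1 h2, fun a b => ⟨(a.1, b.2), rfl, rfl⟩⟩

lemma fc_thst : IsFactorCongruence thst := by
  refine ⟨th, fun a b h1 h2 => Prod.ext h2 h1, fun a b => ⟨(b.1, a.2), rfl, rfl⟩⟩

lemma fc_th2 : IsFactorCongruence th2 := by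
  refine ⟨th2st, fun a b h1 h2 => ?_, fun a b => ?_⟩
  · have : sw a = sw b := Prod.ext h1 h2
    have := congrArg sw this
    rwa [sw_invol, sw_invol] at this
  · refine ⟨sw ((sw a).1, (sw b).2), ?_, ?_⟩
    · show (sw a).1 = (sw (sw ((sw a).1, (sw b).2))).1
      rw [sw_invol]
    · show (sw (sw ((sw a).1, (sw b).2))).2 = (sw b).2
      rw [sw_invol]

/-! ### Failure of BFC -/

def a0 : C := (2, 0)
def b0 : C := (3, 0)

lemma not_BFC : ¬ HasBFC.{0} TL := by
  intro h
  obtain ⟨-, hdist⟩ := h C modelC ⟨(0, 0)⟩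
  have heq := hdist thst th th2 fc_thst fc_th fc_th2
  have hLHS : (thst.inf (th.sup th2)).rel a0 b0 := by
    refine ⟨rfl, fun ψ h1 h2 => ψ.trans (h1 a0 p rfl) (h2 p b0 (show (sw p).1 = (sw b0).1 by decide))⟩
  have hRHS : ((thst.inf th).sup (thst.inf th2)).rel a0 b0 := by
    rw [← heq]; exact hLHS
  have l1 : (thst.inf th).le diag := fun x y hxy => Prod.ext hxy.2 hxy.1
  have l2 : (thst.inf th2).le diag := by
    intro x y hxy
    exact (by decide : ∀ x y : C, x.2 = y.2 → (sw x).1 = (sw y).1 → x = y) x y hxy.1 hxy.2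
  have : a0 = b0 := hRHS diag l1 l2
  exact absurd this (by decide)

/-! ### Failure of DFC -/

lemma interp_zero_A : interp (Fin 4) zeroT = 0 := rfl
lemma interp_one_B : interp (Fin 3) oneT = 1 := rfl

lemma not_DFC : ¬ HasDFC.{0} ![zeroT] ![oneT] TL := by
  rintro ⟨Φ, hΦ⟩
  set par : Fin 1 → C := fun i => (interp (Fin 4) (![zeroT] i), interp (Fin 3) (![oneT] i))
    with hpar
  have h1 : Φ.Realize (Sum.elim (![((2, 2) : C), ((2, 0) : C)]) par) :=
    (hΦ (Fin 4) (Fin 3) modelA modelB ⟨0⟩ ⟨0⟩ 2 2 2 0).2 rfl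
  have h2 : Φ.Realize (⇑sigma ∘ Sum.elim (![((2, 2) : C), ((2, 0) : C)]) par) :=
    (StrongHomClass.realize_formula sigma Φ).2 h1
  have hv : ⇑sigma ∘ Sum.elim (![((2, 2) : C), ((2, 0) : C)]) par =
      Sum.elim (![((3, 2) : C), ((2, 0) : C)]) par := by
    funext s
    rcases s with i | i
    · fin_cases i
      · exact (by decide : sw ((2, 2) : C) = ((3, 2) : C))
      · exact (by decide : sw ((2, 0) : C) = ((2, 0) : C))
    · fin_cases i
      · exact (by decide : sw ((0, 1) : C) = ((0, 1) : C))
  rw [hv] at h2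
  have h3 : (3 : Fin 4) = 2 :=
    (hΦ (Fin 4) (Fin 3) modelA modelB ⟨0⟩ ⟨0⟩ 3 2 2 0).1 h2
  exact absurd h3 (by decide)

end VLAux


/-- **Section 6.1.** `V_L` is a variety with `0⃗` & `1⃗` (with `l = 1`) that has
neither Definable Factor Congruences nor Boolean Factor Congruences. -/
theorem VL_zeroOne_not_DFC_not_BFC :
    Paper.IsEquational Paper.TL ∧
    Paper.HasZeroOne.{0} Paper.TL ![Paper.zeroT] ![Paper.oneT] ∧
    ¬Paper.HasDFC.{0} ![Paper.zeroT] ![Paper.oneT] Paper.TL ∧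
    ¬Paper.HasBFC.{0} Paper.TL := by
  exact ⟨VLAux.isEquational, VLAux.hasZeroOne, VLAux.not_DFC, VLAux.not_BFC⟩
end

section
/- Let N be an even natural number and, for every word α over the alphabet {1,…,N} of length ≤ N, let τ_α = τ_α(x,y,z⃗,x₁,y₁,…,x_n,y_n) be a first-order formula preserved by direct products and by direct factors. For 1 ≤ m ≤ N define E_m := ⋀ {(⋀_{γ≠ε, |αγ|≤N} τ_{αγ}) → τ_α : m ≤ |α| ≤ N, |α| even} and O_m := ⋀ {(⋀_{γ≠ε, |αγ|≤N} τ_{αγ}) → τ_α : m ≤ |α| ≤ N, |α| odd}. Then the formula (∃y₁∀x₁ … ∃y_n∀x_n E₂) ∧ (∃x₁∀y₁ … ∃x_n∀y_n O₁) is preserved by direct factors and by direct products. -/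
open FirstOrder Language

universe u v w

namespace Paper

variable {L : FirstOrder.Language.{v, w}}

/-- A formula is preserved by direct factors. -/
def PreservedByFactors {α : Type*} (φ : L.Formula α) : Prop :=
  ∀ (A : Type u) (B : Type u) [L.Structure A] [L.Structure B] (v : α → A × B),
    φ.Realize v → φ.Realize (fun i => (v i).1) ∧ φ.Realize fun i => (v i).2

/-- A formula is preserved by (binary) direct products. -/
def PreservedByProducts {α : Type*} (φ : L.Formula α) : Prop :=
  ∀ (A : Type u) (B : Type u) [L.Structure A] [L.Structure B] (vA : α → A) (vB : α → B),
    φ.Realize vA → φ.Realize vB → φ.Realize fun i => ((vA i, vB i) : A × B)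

/-- The variable set `(x, y, z⃗, x₁, y₁, …, x_j, y_j)`. -/
inductive MVar (l j : ℕ) : Type
  | x : MVar l j
  | y : MVar l j
  | z (i : Fin l) : MVar l j
  | xa (i : Fin j) : MVar l j
  | yb (i : Fin j) : MVar l j

/-- The assignment `(x, y, z⃗, x⃗, y⃗) ↦ (c, d, e⃗, xs, ys)`. -/
def masg {A : Type u} {l j : ℕ} (c d : A) (e : Fin l → A) (xs ys : Fin j → A) :
    MVar l j → A
  | .x => c
  | .y => d
  | .z i => e i
  | .xa i => xs i
  | .yb i => ys i

variable {A : Type u} [L.Structure A] {l n : ℕ}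

/-- Satisfaction of `E_m` at the assignment `v`:
`E_m = ⋀ {(⋀_{γ≠ε} τ_{αγ}) → τ_α : m ≤ |α| ≤ N, |α| even}`. -/
def ESat (N : ℕ) (τ : List (Fin N) → L.Formula (MVar l n)) (m : ℕ)
    (v : MVar l n → A) : Prop :=
  ∀ α : List (Fin N), m ≤ α.length → α.length ≤ N → Even α.length →
    (∀ γ : List (Fin N), γ ≠ [] → (α ++ γ).length ≤ N → (τ (α ++ γ)).Realize v) →
    (τ α).Realize v

/-- Satisfaction of `O_m` at the assignment `v`:
`O_m = ⋀ {(⋀_{γ≠ε} τ_{αγ}) → τ_α : m ≤ |α| ≤ N, |α| odd}`. -/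
def OSat (N : ℕ) (τ : List (Fin N) → L.Formula (MVar l n)) (m : ℕ)
    (v : MVar l n → A) : Prop :=
  ∀ α : List (Fin N), m ≤ α.length → α.length ≤ N → Odd α.length →
    (∀ γ : List (Fin N), γ ≠ [] → (α ++ γ).length ≤ N → (τ (α ++ γ)).Realize v) →
    (τ α).Realize v

/-- The alternating quantifier prefix `∃ u₁ ∀ w₁ … ∃ u_m ∀ w_m, P us ws`: the
existentially quantified elements are collected in the first list, the universally
quantified ones in the second. -/
def AltSat (A : Type u) : ℕ → (List A → List A → Prop) → List A → List A → Prop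
  | 0, P, us, ws => P us ws
  | m + 1, P, us, ws => ∃ u : A, ∀ w : A, AltSat A m P (us ++ [u]) (ws ++ [w])

/-- Satisfaction of the formula
`(∃y₁∀x₁ … ∃y_n∀x_n E₂) ∧ (∃x₁∀y₁ … ∃x_n∀y_n O₁)` at `(c, d, e⃗)`. -/
def CombSat (N : ℕ) (τ : List (Fin N) → L.Formula (MVar l n))
    (c d : A) (e : Fin l → A) : Prop :=
  AltSat A n (fun bs as => ∀ (hb : bs.length = n) (ha : as.length = n),
    ESat N τ 2 (masg c d e (fun i => as.get (Fin.cast ha.symm i))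
      fun i => bs.get (Fin.cast hb.symm i))) [] [] ∧
  AltSat A n (fun as bs => ∀ (ha : as.length = n) (hb : bs.length = n),
    OSat N τ 1 (masg c d e (fun i => as.get (Fin.cast ha.symm i))
      fun i => bs.get (Fin.cast hb.symm i))) [] []

end Paper


namespace Paper

variable {X : Type u}

/-- The moves produced by strategy `G` against the opponent history `ws ++ (prefixes of ext)`. -/
def playsFrom (G : List X → X) (ws ext : List X) : List X :=
  List.ofFn fun i : Fin ext.length => G (ws ++ ext.take i)

@[simp] lemma length_playsFrom (G : List X → X) (ws ext : List X) :
    (playsFrom G ws ext).length = ext.length := by simp [playsFrom]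

lemma playsFrom_nil (G : List X → X) (ws : List X) : playsFrom G ws [] = [] := by
  simp [playsFrom]

lemma playsFrom_cons (G : List X → X) (ws : List X) (w : X) (ext : List X) :
    playsFrom G ws (w :: ext) = G ws :: playsFrom G (ws ++ [w]) ext := by
  unfold playsFrom
  rw [show (w :: ext).length = ext.length + 1 from rfl, List.ofFn_succ]
  congr 1
  · simp
  · refine congrArg List.ofFn (funext fun i => ?_)
    rw [Fin.val_succ, List.take_succ_cons, List.append_cons]

lemma altSat_intro {P : List X → List X → Prop} (G : List X → X) :
    ∀ (m : ℕ) (us ws : List X),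
      (∀ ext : List X, ext.length = m → P (us ++ playsFrom G ws ext) (ws ++ ext)) →
      AltSat X m P us ws := by
  intro m
  induction m with
  | zero =>
    intro us ws h
    have := h [] rfl
    simpa [playsFrom_nil, AltSat] using this
  | succ m ih =>
    intro us ws h
    refine ⟨G ws, fun w => ih (us ++ [G ws]) (ws ++ [w]) (fun ext hl => ?_)⟩
    have := h (w :: ext) (by simp [hl])
    rw [playsFrom_cons] at this
    simpa [List.append_assoc] using this

lemma altSat_elim {P : List X → List X → Prop} [Nonempty X] :
    ∀ (m : ℕ) (us ws : List X), AltSat X m P us ws →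
      ∃ G : List X → X, ∀ ext : List X, ext.length = m →
        P (us ++ playsFrom G ws ext) (ws ++ ext) := by
  intro m
  induction m with
  | zero =>
    intro us ws h
    refine ⟨fun _ => Classical.arbitrary X, fun ext hl => ?_⟩
    rw [List.length_eq_zero_iff] at hl
    subst hl
    simpa [playsFrom_nil, AltSat] using h
  | succ m ih =>
    intro us ws h
    obtain ⟨u, hu⟩ := h
    choose Gw hGw using fun w => ih (us ++ [u]) (ws ++ [w]) (hu w)
    refine ⟨fun hist => if hh : ws.length < hist.length then Gw (hist.get ⟨ws.length, hh⟩) hist else u,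
      fun ext hl => ?_⟩
    match ext, hl with
    | w :: ext', hl =>
      rw [playsFrom_cons]
      have h0 : (if hh : ws.length < ws.length then Gw (ws.get ⟨ws.length, hh⟩) ws else u) = u := by
        simp
      rw [h0]
      have hrest : playsFrom (fun hist => if hh : ws.length < hist.length then Gw (hist.get ⟨ws.length, hh⟩) hist else u) (ws ++ [w]) ext'
          = playsFrom (Gw w) (ws ++ [w]) ext' := by
        unfold playsFrom
        refine congrArg List.ofFn (funext fun i => ?_)
        have hlt : ws.length < ((ws ++ [w]) ++ ext'.take i).length := by simp
        dsimp only
        rw [dif_pos hlt]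
        congr 1
        have : (ws ++ [w] ++ List.take (↑i) ext').get ⟨ws.length, hlt⟩
            = (ws ++ (w :: List.take (↑i) ext')).get ⟨ws.length, by simp⟩ := by
          simp [← List.append_cons]
        rw [this, List.get_eq_getElem, List.getElem_append_right (le_refl _)]
        simp
      rw [hrest]
      have := hGw w ext' (by simpa using hl)
      simpa [List.append_assoc] using this

end Paper

namespace Paper

/-- The key combinatorial lemma: a reverse induction on word length along an
infinite chain of assignments linked by E-facts and O-facts. -/
lemma chainLemma {β : Type*} {N : ℕ} (f : ℕ → List β → Prop) (α : List β)
    (hαN : α.length ≤ N)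
    (hz0 : ∀ γ : List β, γ ≠ [] → (α ++ γ).length ≤ N → f 0 (α ++ γ))
    (hsame : ∀ (k : ℕ) (δ : List β), δ.length % 2 = α.length % 2 →
        α.length ≤ δ.length → δ.length ≤ N →
        (∀ γ, γ ≠ [] → (δ ++ γ).length ≤ N → f (2*k) (δ ++ γ)) →
        (∀ γ, γ ≠ [] → (δ ++ γ).length ≤ N → f (2*k+1) (δ ++ γ)) →
        f (2*k) δ ∧ f (2*k+1) δ)
    (hdiff : ∀ (k : ℕ) (δ : List β), δ.length % 2 ≠ α.length % 2 →
        α.length ≤ δ.length → δ.length ≤ N →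
        (∀ γ, γ ≠ [] → (δ ++ γ).length ≤ N → f (2*k+2) (δ ++ γ)) →
        (∀ γ, γ ≠ [] → (δ ++ γ).length ≤ N → f (2*k+1) (δ ++ γ)) →
        f (2*k+2) δ ∧ f (2*k+1) δ) :
    f 0 α := by
  have key : ∀ t : ℕ, ∀ ρ : List β, ρ ≠ [] → (α ++ ρ).length ≤ N →
      N - (α ++ ρ).length < t → ∀ j : ℕ, f (j+1) (α ++ ρ) := by
    intro t
    induction t with
    | zero => intro ρ _ _ h; omega
    | succ t ih =>
      intro ρ hρ hlen hbd j
      have hρ1 : 1 ≤ ρ.length := List.length_pos_iff.mpr hρ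
      -- all hypotheses at extensions of α ++ ρ are available
      have Hany : ∀ j' : ℕ, ∀ γ, γ ≠ [] → ((α ++ ρ) ++ γ).length ≤ N →
          f j' ((α ++ ρ) ++ γ) := by
        intro j' γ hγ hγlen
        have hγ1 : 1 ≤ γ.length := List.length_pos_iff.mpr hγ
        match j' with
        | 0 =>
          rw [List.append_assoc]
          exact hz0 (ρ ++ γ) (by simp [hρ]) (by rw [← List.append_assoc]; exact hγlen)
        | j'' + 1 =>
          rw [List.append_assoc]
          refine ih (ρ ++ γ) (by simp [hρ]) (by rw [← List.append_assoc]; exact hγlen) ?_ j''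
          simp only [List.length_append] at hbd hγlen hlen ⊢
          omega
      by_cases hp : (α ++ ρ).length % 2 = α.length % 2
      · rcases Nat.even_or_odd j with ⟨k, hk⟩ | ⟨k, hk⟩
        · have h := hsame k (α ++ ρ) hp (by simp) hlen (Hany (2*k)) (Hany (2*k+1))
          have heq : j + 1 = 2*k + 1 := by omega
          rw [heq]; exact h.2
        · have h := hsame (k+1) (α ++ ρ) hp (by simp) hlen (Hany (2*(k+1))) (Hany (2*(k+1)+1))
          have heq : j + 1 = 2*(k+1) := by omega
          rw [heq]; exact h.1
      · rcases Nat.even_or_odd j with ⟨k, hk⟩ | ⟨k, hk⟩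
        · have h := hdiff k (α ++ ρ) hp (by simp) hlen (Hany (2*k+2)) (Hany (2*k+1))
          have heq : j + 1 = 2*k + 1 := by omega
          rw [heq]; exact h.2
        · have h := hdiff k (α ++ ρ) hp (by simp) hlen (Hany (2*k+2)) (Hany (2*k+1))
          have heq : j + 1 = 2*k + 2 := by omega
          rw [heq]; exact h.1
  have H1 : ∀ γ, γ ≠ [] → (α ++ γ).length ≤ N → f 1 (α ++ γ) := by
    intro γ hγ hγlen
    exact key (N+1) γ hγ hγlen (by omega) 0
  have h := hsame 0 α rfl (le_refl _) hαN (by simpa using hz0) (by simpa using H1)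
  simpa using h.1

end Paper

namespace Paper

variable {Af Bf Cf : Type u}

/-- Interleaved runs: `mv pr π₁ π₂ G0 G1 r hist` is the existential move of run `r`
at round `hist.length`, when the outer opponent's history (in the first factor) is
`hist`.  Even-indexed runs use strategy `G0`, odd-indexed runs use `G1`.  The
opponent moves fed to each run are cross-assembled from neighbouring runs. -/
def mv (pr : Af → Bf → Cf) (π₁ : Cf → Af) (π₂ : Cf → Bf) (G0 G1 : List Cf → Cf) :
    ℕ → List Af → Cf
  | r, hist =>
    (if r % 2 = 0 then G0 else G1) (List.ofFn fun i : Fin hist.length =>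
      pr (if r = 0 then hist.get i
          else π₁ (mv pr π₁ π₂ G0 G1 (if r % 2 = 0 then r - 1 else r + 1) (hist.take i)))
         (π₂ (mv pr π₁ π₂ G0 G1 (if r % 2 = 0 then r + 1 else r - 1) (hist.take i))))
  termination_by r hist => hist.length
  decreasing_by
    all_goals simp only [List.length_take]; exact lt_of_le_of_lt (min_le_left _ _) i.isLt

/-- The opponent-move list fed to run `r` given outer history `hist`. -/
def oppL (pr : Af → Bf → Cf) (π₁ : Cf → Af) (π₂ : Cf → Bf) (G0 G1 : List Cf → Cf)
    (r : ℕ) (hist : List Af) : List Cf :=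
  List.ofFn fun i : Fin hist.length =>
    pr (if r = 0 then hist.get i
        else π₁ (mv pr π₁ π₂ G0 G1 (if r % 2 = 0 then r - 1 else r + 1) (hist.take i)))
       (π₂ (mv pr π₁ π₂ G0 G1 (if r % 2 = 0 then r + 1 else r - 1) (hist.take i)))

lemma mv_eq (pr : Af → Bf → Cf) (π₁ : Cf → Af) (π₂ : Cf → Bf) (G0 G1 : List Cf → Cf)
    (r : ℕ) (hist : List Af) :
    mv pr π₁ π₂ G0 G1 r hist
      = (if r % 2 = 0 then G0 else G1) (oppL pr π₁ π₂ G0 G1 r hist) := by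
  rw [mv]; rfl

@[simp] lemma length_oppL (pr : Af → Bf → Cf) (π₁ : Cf → Af) (π₂ : Cf → Bf)
    (G0 G1 : List Cf → Cf) (r : ℕ) (hist : List Af) :
    (oppL pr π₁ π₂ G0 G1 r hist).length = hist.length := by simp [oppL]

lemma oppL_take (pr : Af → Bf → Cf) (π₁ : Cf → Af) (π₂ : Cf → Bf)
    (G0 G1 : List Cf → Cf) (r : ℕ) (hist : List Af) (i : ℕ) (hi : i ≤ hist.length) :
    (oppL pr π₁ π₂ G0 G1 r hist).take i = oppL pr π₁ π₂ G0 G1 r (hist.take i) := by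
  apply List.ext_getElem
  · simp [hi]
  · intro j h1 h2
    have hj : j < i := by simp [hi] at h1; omega
    have hj2 : j < hist.length := lt_of_lt_of_le hj hi
    rw [List.getElem_take]
    simp only [oppL, List.getElem_ofFn]
    have ht : (hist.take i).take j = hist.take j := by
      rw [List.take_take]; congr 1; omega
    have hg : (hist.take i).get ⟨j, by simpa [hi] ⟩ = hist.get ⟨j, hj2⟩ := by
      simp [List.get_eq_getElem, List.getElem_take]
    congr 1 <;> simp [ht, List.get_eq_getElem, List.getElem_take]

end Paper

namespace Paper

variable {Af Bf Cf : Type u}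

/-- The (cast) opponent vector of run `r`. -/
def ovv (pr : Af → Bf → Cf) (π₁ : Cf → Af) (π₂ : Cf → Bf) (G0 G1 : List Cf → Cf)
    (n r : ℕ) (ξ : List Af) (hn : ξ.length = n) : Fin n → Cf :=
  fun i => (oppL pr π₁ π₂ G0 G1 r ξ).get
    (Fin.cast (show n = (oppL pr π₁ π₂ G0 G1 r ξ).length by simp [hn]) i)

/-- The (cast) vector of existential moves of run `r`. -/
def mvvv (pr : Af → Bf → Cf) (π₁ : Cf → Af) (π₂ : Cf → Bf) (G0 G1 : List Cf → Cf)
    (n r : ℕ) (ξ : List Af) : Fin n → Cf :=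
  fun i => mv pr π₁ π₂ G0 G1 r (ξ.take i.val)

lemma ovv_apply (pr : Af → Bf → Cf) (π₁ : Cf → Af) (π₂ : Cf → Bf) (G0 G1 : List Cf → Cf)
    (n r : ℕ) (ξ : List Af) (hn : ξ.length = n) (i : Fin n) :
    ovv pr π₁ π₂ G0 G1 n r ξ hn i
      = pr (if r = 0 then ξ.get (Fin.cast hn.symm i)
            else π₁ (mv pr π₁ π₂ G0 G1 (if r % 2 = 0 then r - 1 else r + 1) (ξ.take i.val)))
           (π₂ (mv pr π₁ π₂ G0 G1 (if r % 2 = 0 then r + 1 else r - 1) (ξ.take i.val))) := by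
  simp only [ovv, oppL, List.get_ofFn]
  rfl

variable {pr : Af → Bf → Cf} {π₁ : Cf → Af} {π₂ : Cf → Bf} {G0 G1 : List Cf → Cf}
  {n : ℕ} {ξ : List Af} (hn : ξ.length = n)

lemma L1a (h2 : ∀ a b, π₂ (pr a b) = b) {r : ℕ} (hr : r % 2 = 0) :
    π₂ ∘ ovv pr π₁ π₂ G0 G1 n r ξ hn = π₂ ∘ mvvv pr π₁ π₂ G0 G1 n (r+1) ξ := by
  funext i
  simp only [Function.comp_apply, ovv_apply, h2, hr, if_pos, mvvv]

lemma L1b (h2 : ∀ a b, π₂ (pr a b) = b) {r : ℕ} (hr : r % 2 = 1) :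
    π₂ ∘ ovv pr π₁ π₂ G0 G1 n r ξ hn = π₂ ∘ mvvv pr π₁ π₂ G0 G1 n (r-1) ξ := by
  funext i
  have : ¬ (r % 2 = 0) := by omega
  simp only [Function.comp_apply, ovv_apply, h2, this, if_neg, if_false, mvvv]

lemma L2a (h1 : ∀ a b, π₁ (pr a b) = a) {r : ℕ} (hr : r % 2 = 1) :
    π₁ ∘ ovv pr π₁ π₂ G0 G1 n r ξ hn = π₁ ∘ mvvv pr π₁ π₂ G0 G1 n (r+1) ξ := by
  funext i
  have h0 : r ≠ 0 := by omega
  have : ¬ (r % 2 = 0) := by omega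
  simp only [Function.comp_apply, ovv_apply, h1, h0, this, if_neg, if_false, mvvv]

lemma L2b (h1 : ∀ a b, π₁ (pr a b) = a) {r : ℕ} (hr : r % 2 = 0) (h0 : r ≠ 0) :
    π₁ ∘ ovv pr π₁ π₂ G0 G1 n r ξ hn = π₁ ∘ mvvv pr π₁ π₂ G0 G1 n (r-1) ξ := by
  funext i
  simp only [Function.comp_apply, ovv_apply, h1, h0, hr, if_pos, if_neg, if_false, mvvv]

lemma L2c (h1 : ∀ a b, π₁ (pr a b) = a) :
    π₁ ∘ ovv pr π₁ π₂ G0 G1 n 0 ξ hn = fun i => ξ.get (Fin.cast hn.symm i) := by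
  funext i
  simp only [Function.comp_apply, ovv_apply, h1, if_pos]

lemma L3even (hn : ξ.length = n) {r : ℕ} (hr : r % 2 = 0)
    (pf : n = (playsFrom G0 [] (oppL pr π₁ π₂ G0 G1 r ξ)).length) :
    (fun i : Fin n => (playsFrom G0 [] (oppL pr π₁ π₂ G0 G1 r ξ)).get (Fin.cast pf i))
      = mvvv pr π₁ π₂ G0 G1 n r ξ := by
  funext i
  have hi : (i : ℕ) ≤ ξ.length := by have := i.isLt; omega
  simp only [playsFrom, List.get_ofFn, List.nil_append, Fin.coe_cast]
  change G0 (List.take (i : ℕ) (oppL pr π₁ π₂ G0 G1 r ξ)) = _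
  rw [oppL_take pr π₁ π₂ G0 G1 r ξ i hi]
  rw [mvvv]
  rw [mv_eq, if_pos hr]

lemma L3odd (hn : ξ.length = n) {r : ℕ} (hr : r % 2 = 1)
    (pf : n = (playsFrom G1 [] (oppL pr π₁ π₂ G0 G1 r ξ)).length) :
    (fun i : Fin n => (playsFrom G1 [] (oppL pr π₁ π₂ G0 G1 r ξ)).get (Fin.cast pf i))
      = mvvv pr π₁ π₂ G0 G1 n r ξ := by
  funext i
  have hi : (i : ℕ) ≤ ξ.length := by have := i.isLt; omega
  simp only [playsFrom, List.get_ofFn, List.nil_append, Fin.coe_cast]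
  change G1 (List.take (i : ℕ) (oppL pr π₁ π₂ G0 G1 r ξ)) = _
  rw [oppL_take pr π₁ π₂ G0 G1 r ξ i hi]
  rw [mvvv]
  rw [mv_eq, if_neg (by omega)]

/-- Composition of `masg` with a map. -/
lemma masg_comp {Df : Type u} (f : Cf → Df) {l j : ℕ} (c d : Cf) (e : Fin l → Cf)
    (xs ys : Fin j → Cf) :
    f ∘ masg c d e xs ys = masg (f c) (f d) (f ∘ e) (f ∘ xs) (f ∘ ys) := by
  funext m
  cases m <;> rfl

end Paper

namespace Paper

variable {L : FirstOrder.Language.{v, w}} {l n N : ℕ}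

lemma factor_core {Cf Af Bf : Type u} [L.Structure Cf] [L.Structure Af] [L.Structure Bf]
    (τ : List (Fin N) → L.Formula (MVar l n))
    (π₁ : Cf → Af) (π₂ : Cf → Bf) (pr : Af → Bf → Cf)
    (h1 : ∀ a b, π₁ (pr a b) = a) (h2 : ∀ a b, π₂ (pr a b) = b)
    (habs : ∀ α : List (Fin N), α.length ≤ N → ∀ v : MVar l n → Cf,
        (τ α).Realize v ↔ ((τ α).Realize (π₁ ∘ v) ∧ (τ α).Realize (π₂ ∘ v)))
    (c d : Cf) (e : Fin l → Cf) (h : CombSat N τ c d e) :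
    CombSat N τ (π₁ c) (π₁ d) (π₁ ∘ e) := by
  obtain ⟨hE, hO⟩ := h
  have : Nonempty Cf := ⟨c⟩
  obtain ⟨GE, hGE⟩ := altSat_elim n [] [] hE
  obtain ⟨GO, hGO⟩ := altSat_elim n [] [] hO
  simp only [List.nil_append] at hGE hGO
  constructor
  · -- the `E₂` conjunct, game in `Af`
    apply altSat_intro (fun hist => π₁ (mv pr π₁ π₂ GE GO 0 hist)) n [] []
    intro ξ hξ
    simp only [List.nil_append]
    intro hb ha
    have hLl : ∀ r, (oppL pr π₁ π₂ GE GO r ξ).length = n := fun r => by simp [hξ]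
    -- the product runs, in clean form
    have FE : ∀ k, ESat N τ 2 (masg c d e (ovv pr π₁ π₂ GE GO n (2*k) ξ hξ)
        (mvvv pr π₁ π₂ GE GO n (2*k) ξ)) := by
      intro k
      have pf2 : (playsFrom GE [] (oppL pr π₁ π₂ GE GO (2*k) ξ)).length = n := by
        simp [hξ]
      have h' := hGE (oppL pr π₁ π₂ GE GO (2*k) ξ) (hLl _) pf2 (hLl _)
      rw [L3even hξ (by omega) pf2.symm] at h'
      exact h'
    have FO : ∀ k, OSat N τ 1 (masg c d e (mvvv pr π₁ π₂ GE GO n (2*k+1) ξ)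
        (ovv pr π₁ π₂ GE GO n (2*k+1) ξ hξ)) := by
      intro k
      have pf2 : (playsFrom GO [] (oppL pr π₁ π₂ GE GO (2*k+1) ξ)).length = n := by
        simp [hξ]
      have h' := hGO (oppL pr π₁ π₂ GE GO (2*k+1) ξ) (hLl _) pf2 (hLl _)
      rw [L3odd hξ (by omega) pf2.symm] at h'
      exact h'
    -- the linking equalities
    have P2 : ∀ k, π₂ ∘ masg c d e (ovv pr π₁ π₂ GE GO n (2*k) ξ hξ)
        (mvvv pr π₁ π₂ GE GO n (2*k) ξ)
        = π₂ ∘ masg c d e (mvvv pr π₁ π₂ GE GO n (2*k+1) ξ)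
          (ovv pr π₁ π₂ GE GO n (2*k+1) ξ hξ) := by
      intro k
      have e1 := L1a (pr := pr) (π₁ := π₁) (π₂ := π₂) (n := n) (G0 := GE) (G1 := GO) hξ h2 (r := 2*k) (by omega)
      have e2 := L1b (pr := pr) (π₁ := π₁) (π₂ := π₂) (n := n) (G0 := GE) (G1 := GO) hξ h2 (r := 2*k+1) (by omega)
      rw [show 2*k+1-1 = 2*k from rfl] at e2
      rw [masg_comp, masg_comp, e1, e2]
    have P1 : ∀ k, π₁ ∘ masg c d e (mvvv pr π₁ π₂ GE GO n (2*k+1) ξ)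
        (ovv pr π₁ π₂ GE GO n (2*k+1) ξ hξ)
        = π₁ ∘ masg c d e (ovv pr π₁ π₂ GE GO n (2*k+2) ξ hξ)
          (mvvv pr π₁ π₂ GE GO n (2*k+2) ξ) := by
      intro k
      have e3 := L2a (pr := pr) (π₁ := π₁) (π₂ := π₂) (n := n) (G0 := GE) (G1 := GO) hξ h1 (r := 2*k+1) (by omega)
      have e4 := L2b (pr := pr) (π₁ := π₁) (π₂ := π₂) (n := n) (G0 := GE) (G1 := GO) hξ h1 (r := 2*k+2) (by omega) (by omega)
      rw [show 2*k+1+1 = 2*k+2 from rfl] at e3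
      rw [show 2*k+2-1 = 2*k+1 from rfl] at e4
      rw [masg_comp, masg_comp, e3, e4]
    -- the goal assignment equals the first-factor projection of run 0
    have hasg : (masg (π₁ c) (π₁ d) (π₁ ∘ e) (fun i => ξ.get (Fin.cast ha.symm i))
        (fun i => (playsFrom (fun hist => π₁ (mv pr π₁ π₂ GE GO 0 hist)) [] ξ).get
          (Fin.cast hb.symm i)))
        = π₁ ∘ masg c d e (ovv pr π₁ π₂ GE GO n 0 ξ hξ) (mvvv pr π₁ π₂ GE GO n 0 ξ) := by
      funext m
      cases m with
      | x => rfl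
      | y => rfl
      | z i => rfl
      | xa i =>
        show ξ.get (Fin.cast ha.symm i) = π₁ (ovv pr π₁ π₂ GE GO n 0 ξ hξ i)
        rw [ovv_apply, h1, if_pos rfl]
      | yb i =>
        show (playsFrom (fun hist => π₁ (mv pr π₁ π₂ GE GO 0 hist)) [] ξ).get
            (Fin.cast hb.symm i) = π₁ (mvvv pr π₁ π₂ GE GO n 0 ξ i)
        simp only [playsFrom, List.get_ofFn, List.nil_append, Fin.coe_cast, mvvv]
        rfl
    intro α hα2 hαN heven Hg
    rw [hasg] at Hg ⊢
    have h0e : (0:ℕ) % 2 = 0 := rfl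
    have hres := chainLemma (N := N)
      (fun j δ => if j % 2 = 0
        then (τ δ).Realize (π₁ ∘ masg c d e (ovv pr π₁ π₂ GE GO n j ξ hξ)
          (mvvv pr π₁ π₂ GE GO n j ξ))
        else (τ δ).Realize (π₂ ∘ masg c d e (mvvv pr π₁ π₂ GE GO n j ξ)
          (ovv pr π₁ π₂ GE GO n j ξ hξ))) α hαN
      ?_ ?_ ?_
    · simpa using hres
    · -- hz0
      intro γ hγ hγN
      simpa using Hg γ hγ hγN
    · -- hsame : even δ, use the E-runs
      intro k δ hp hle hδN H2k H21
      have heδ : Even δ.length := by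
        rw [Nat.even_iff] at heven ⊢; omega
      have h2δ : 2 ≤ δ.length := le_trans hα2 hle
      have hyp : ∀ γ, γ ≠ [] → (δ ++ γ).length ≤ N →
          (τ (δ ++ γ)).Realize (masg c d e (ovv pr π₁ π₂ GE GO n (2*k) ξ hξ)
            (mvvv pr π₁ π₂ GE GO n (2*k) ξ)) := by
        intro γ hγ hγN
        rw [habs _ hγN]
        constructor
        · have hh := H2k γ hγ hγN
          simpa [(by omega : 2*k % 2 = 0)] using hh
        · have hh := H21 γ hγ hγN
          rw [P2 k]
          simpa [(by omega : (2*k+1) % 2 = 1)] using hh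
      have hc := FE k δ h2δ hδN heδ hyp
      rw [habs _ hδN] at hc
      constructor
      · simpa [(by omega : 2*k % 2 = 0)] using hc.1
      · have := hc.2
        rw [P2 k] at this
        simpa [(by omega : (2*k+1) % 2 = 1)] using this
    · -- hdiff : odd δ, use the O-runs
      intro k δ hp hle hδN H2k2 H21
      have hoδ : Odd δ.length := by
        rw [Nat.even_iff] at heven; rw [Nat.odd_iff]; omega
      have h1δ : 1 ≤ δ.length := by
        rcases hoδ with ⟨m, hm⟩; omega
      have hyp : ∀ γ, γ ≠ [] → (δ ++ γ).length ≤ N →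
          (τ (δ ++ γ)).Realize (masg c d e (mvvv pr π₁ π₂ GE GO n (2*k+1) ξ)
            (ovv pr π₁ π₂ GE GO n (2*k+1) ξ hξ)) := by
        intro γ hγ hγN
        rw [habs _ hγN]
        constructor
        · have hh := H2k2 γ hγ hγN
          rw [P1 k]
          simpa [(by omega : (2*k+2) % 2 = 0)] using hh
        · have hh := H21 γ hγ hγN
          simpa [(by omega : (2*k+1) % 2 = 1)] using hh
      have hc := FO k δ h1δ hδN hoδ hyp
      rw [habs _ hδN] at hc
      constructor
      · have := hc.1
        rw [P1 k] at this
        simpa [(by omega : (2*k+2) % 2 = 0)] using this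
      · simpa [(by omega : (2*k+1) % 2 = 1)] using hc.2
  · -- the `O₁` conjunct, game in `Af`
    apply altSat_intro (fun hist => π₁ (mv pr π₁ π₂ GO GE 0 hist)) n [] []
    intro ξ hξ
    simp only [List.nil_append]
    intro ha hb
    have hLl : ∀ r, (oppL pr π₁ π₂ GO GE r ξ).length = n := fun r => by simp [hξ]
    have FO : ∀ k, OSat N τ 1 (masg c d e (mvvv pr π₁ π₂ GO GE n (2*k) ξ)
        (ovv pr π₁ π₂ GO GE n (2*k) ξ hξ)) := by
      intro k
      have pf2 : (playsFrom GO [] (oppL pr π₁ π₂ GO GE (2*k) ξ)).length = n := by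
        simp [hξ]
      have h' := hGO (oppL pr π₁ π₂ GO GE (2*k) ξ) (hLl _) pf2 (hLl _)
      rw [L3even hξ (by omega) pf2.symm] at h'
      exact h'
    have FE : ∀ k, ESat N τ 2 (masg c d e (ovv pr π₁ π₂ GO GE n (2*k+1) ξ hξ)
        (mvvv pr π₁ π₂ GO GE n (2*k+1) ξ)) := by
      intro k
      have pf2 : (playsFrom GE [] (oppL pr π₁ π₂ GO GE (2*k+1) ξ)).length = n := by
        simp [hξ]
      have h' := hGE (oppL pr π₁ π₂ GO GE (2*k+1) ξ) (hLl _) pf2 (hLl _)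
      rw [L3odd hξ (by omega) pf2.symm] at h'
      exact h'
    have P2 : ∀ k, π₂ ∘ masg c d e (mvvv pr π₁ π₂ GO GE n (2*k) ξ)
        (ovv pr π₁ π₂ GO GE n (2*k) ξ hξ)
        = π₂ ∘ masg c d e (ovv pr π₁ π₂ GO GE n (2*k+1) ξ hξ)
          (mvvv pr π₁ π₂ GO GE n (2*k+1) ξ) := by
      intro k
      have e1 := L1a (pr := pr) (π₁ := π₁) (π₂ := π₂) (n := n) (G0 := GO) (G1 := GE) hξ h2 (r := 2*k) (by omega)
      have e2 := L1b (pr := pr) (π₁ := π₁) (π₂ := π₂) (n := n) (G0 := GO) (G1 := GE) hξ h2 (r := 2*k+1) (by omega)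
      rw [show 2*k+1-1 = 2*k from rfl] at e2
      rw [masg_comp, masg_comp, e1, e2]
    have P1 : ∀ k, π₁ ∘ masg c d e (ovv pr π₁ π₂ GO GE n (2*k+1) ξ hξ)
        (mvvv pr π₁ π₂ GO GE n (2*k+1) ξ)
        = π₁ ∘ masg c d e (mvvv pr π₁ π₂ GO GE n (2*k+2) ξ)
          (ovv pr π₁ π₂ GO GE n (2*k+2) ξ hξ) := by
      intro k
      have e3 := L2a (pr := pr) (π₁ := π₁) (π₂ := π₂) (n := n) (G0 := GO) (G1 := GE) hξ h1 (r := 2*k+1) (by omega)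
      have e4 := L2b (pr := pr) (π₁ := π₁) (π₂ := π₂) (n := n) (G0 := GO) (G1 := GE) hξ h1 (r := 2*k+2) (by omega) (by omega)
      rw [show 2*k+1+1 = 2*k+2 from rfl] at e3
      rw [show 2*k+2-1 = 2*k+1 from rfl] at e4
      rw [masg_comp, masg_comp, e3, e4]
    have hasg : (masg (π₁ c) (π₁ d) (π₁ ∘ e)
        (fun i => (playsFrom (fun hist => π₁ (mv pr π₁ π₂ GO GE 0 hist)) [] ξ).get
          (Fin.cast ha.symm i))
        (fun i => ξ.get (Fin.cast hb.symm i)))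
        = π₁ ∘ masg c d e (mvvv pr π₁ π₂ GO GE n 0 ξ) (ovv pr π₁ π₂ GO GE n 0 ξ hξ) := by
      funext m
      cases m with
      | x => rfl
      | y => rfl
      | z i => rfl
      | xa i =>
        show (playsFrom (fun hist => π₁ (mv pr π₁ π₂ GO GE 0 hist)) [] ξ).get
            (Fin.cast ha.symm i) = π₁ (mvvv pr π₁ π₂ GO GE n 0 ξ i)
        simp only [playsFrom, List.get_ofFn, List.nil_append, Fin.coe_cast, mvvv]
        rfl
      | yb i =>
        show ξ.get (Fin.cast hb.symm i) = π₁ (ovv pr π₁ π₂ GO GE n 0 ξ hξ i)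
        rw [ovv_apply, h1, if_pos rfl]
    intro α hα1 hαN hodd Hg
    rw [hasg] at Hg ⊢
    have hres := chainLemma (N := N)
      (fun j δ => if j % 2 = 0
        then (τ δ).Realize (π₁ ∘ masg c d e (mvvv pr π₁ π₂ GO GE n j ξ)
          (ovv pr π₁ π₂ GO GE n j ξ hξ))
        else (τ δ).Realize (π₂ ∘ masg c d e (ovv pr π₁ π₂ GO GE n j ξ hξ)
          (mvvv pr π₁ π₂ GO GE n j ξ))) α hαN
      ?_ ?_ ?_
    · simpa using hres
    · intro γ hγ hγN
      simpa using Hg γ hγ hγN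
    · -- hsame : odd δ, use the O-runs
      intro k δ hp hle hδN H2k H21
      have hoδ : Odd δ.length := by
        rw [Nat.odd_iff] at hodd ⊢; omega
      have h1δ : 1 ≤ δ.length := by
        rcases hoδ with ⟨m, hm⟩; omega
      have hyp : ∀ γ, γ ≠ [] → (δ ++ γ).length ≤ N →
          (τ (δ ++ γ)).Realize (masg c d e (mvvv pr π₁ π₂ GO GE n (2*k) ξ)
            (ovv pr π₁ π₂ GO GE n (2*k) ξ hξ)) := by
        intro γ hγ hγN
        rw [habs _ hγN]
        constructor
        · have hh := H2k γ hγ hγN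
          simpa [(by omega : 2*k % 2 = 0)] using hh
        · have hh := H21 γ hγ hγN
          rw [P2 k]
          simpa [(by omega : (2*k+1) % 2 = 1)] using hh
      have hc := FO k δ h1δ hδN hoδ hyp
      rw [habs _ hδN] at hc
      constructor
      · simpa [(by omega : 2*k % 2 = 0)] using hc.1
      · have := hc.2
        rw [P2 k] at this
        simpa [(by omega : (2*k+1) % 2 = 1)] using this
    · -- hdiff : even δ, use the E-runs
      intro k δ hp hle hδN H2k2 H21
      have heδ : Even δ.length := by
        rw [Nat.odd_iff] at hodd; rw [Nat.even_iff]; omega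
      have h2δ : 2 ≤ δ.length := by
        rw [Nat.odd_iff] at hodd; rw [Nat.even_iff] at heδ; omega
      have hyp : ∀ γ, γ ≠ [] → (δ ++ γ).length ≤ N →
          (τ (δ ++ γ)).Realize (masg c d e (ovv pr π₁ π₂ GO GE n (2*k+1) ξ hξ)
            (mvvv pr π₁ π₂ GO GE n (2*k+1) ξ)) := by
        intro γ hγ hγN
        rw [habs _ hγN]
        constructor
        · have hh := H2k2 γ hγ hγN
          rw [P1 k]
          simpa [(by omega : (2*k+2) % 2 = 0)] using hh
        · have hh := H21 γ hγ hγN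
          simpa [(by omega : (2*k+1) % 2 = 1)] using hh
      have hc := FE k δ h2δ hδN heδ hyp
      rw [habs _ hδN] at hc
      constructor
      · have := hc.1
        rw [P1 k] at this
        simpa [(by omega : (2*k+2) % 2 = 0)] using this
      · simpa [(by omega : (2*k+1) % 2 = 1)] using hc.2

end Paper

namespace Paper

variable {L : FirstOrder.Language.{v, w}} {l n N : ℕ}

lemma product_core {Cf Af Bf : Type u} [L.Structure Cf] [L.Structure Af] [L.Structure Bf]
    (τ : List (Fin N) → L.Formula (MVar l n))
    (π₁ : Cf → Af) (π₂ : Cf → Bf) (pr : Af → Bf → Cf)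
    (h1 : ∀ a b, π₁ (pr a b) = a) (h2 : ∀ a b, π₂ (pr a b) = b)
    (habs : ∀ α : List (Fin N), α.length ≤ N → ∀ v : MVar l n → Cf,
        (τ α).Realize v ↔ ((τ α).Realize (π₁ ∘ v) ∧ (τ α).Realize (π₂ ∘ v)))
    (c d : Cf) (e : Fin l → Cf)
    (hA : CombSat N τ (π₁ c) (π₁ d) (π₁ ∘ e)) (hB : CombSat N τ (π₂ c) (π₂ d) (π₂ ∘ e)) :
    CombSat N τ c d e := by
  obtain ⟨hEA, hOA⟩ := hA
  obtain ⟨hEB, hOB⟩ := hB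
  have : Nonempty Af := ⟨π₁ c⟩
  have : Nonempty Bf := ⟨π₂ c⟩
  obtain ⟨GA, hGA⟩ := altSat_elim n [] [] hEA
  obtain ⟨GB, hGB⟩ := altSat_elim n [] [] hEB
  obtain ⟨GA', hGA'⟩ := altSat_elim n [] [] hOA
  obtain ⟨GB', hGB'⟩ := altSat_elim n [] [] hOB
  simp only [List.nil_append] at hGA hGB hGA' hGB'
  constructor
  · apply altSat_intro (fun hist => pr (GA (hist.map π₁)) (GB (hist.map π₂))) n [] []
    intro ws hws
    simp only [List.nil_append]
    intro hb ha
    have hwA : (ws.map π₁).length = n := by simp [hws]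
    have pfA : (playsFrom GA [] (ws.map π₁)).length = n := by simp [hws]
    have hwB : (ws.map π₂).length = n := by simp [hws]
    have pfB : (playsFrom GB [] (ws.map π₂)).length = n := by simp [hws]
    have hA' := hGA (ws.map π₁) hwA pfA hwA
    have hB' := hGB (ws.map π₂) hwB pfB hwB
    have e1 : (masg (π₁ c) (π₁ d) (π₁ ∘ e)
        (fun i => (ws.map π₁).get (Fin.cast hwA.symm i))
        (fun i => (playsFrom GA [] (ws.map π₁)).get (Fin.cast pfA.symm i)))
        = π₁ ∘ masg c d e (fun i => ws.get (Fin.cast ha.symm i))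
          (fun i => (playsFrom (fun hist => pr (GA (hist.map π₁)) (GB (hist.map π₂))) [] ws).get
            (Fin.cast hb.symm i)) := by
      funext m
      cases m with
      | x => rfl
      | y => rfl
      | z i => rfl
      | xa i =>
        show (ws.map π₁).get (Fin.cast hwA.symm i) = π₁ (ws.get (Fin.cast ha.symm i))
        simp [List.get_eq_getElem, List.getElem_map]
      | yb i =>
        show (playsFrom GA [] (ws.map π₁)).get (Fin.cast pfA.symm i)
            = π₁ ((playsFrom (fun hist => pr (GA (hist.map π₁)) (GB (hist.map π₂))) [] ws).get
              (Fin.cast hb.symm i))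
        simp [playsFrom, List.get_ofFn, h1, List.map_take]
        rfl
    have e2 : (masg (π₂ c) (π₂ d) (π₂ ∘ e)
        (fun i => (ws.map π₂).get (Fin.cast hwB.symm i))
        (fun i => (playsFrom GB [] (ws.map π₂)).get (Fin.cast pfB.symm i)))
        = π₂ ∘ masg c d e (fun i => ws.get (Fin.cast ha.symm i))
          (fun i => (playsFrom (fun hist => pr (GA (hist.map π₁)) (GB (hist.map π₂))) [] ws).get
            (Fin.cast hb.symm i)) := by
      funext m
      cases m with
      | x => rfl
      | y => rfl
      | z i => rfl
      | xa i =>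
        show (ws.map π₂).get (Fin.cast hwB.symm i) = π₂ (ws.get (Fin.cast ha.symm i))
        simp [List.get_eq_getElem, List.getElem_map]
      | yb i =>
        show (playsFrom GB [] (ws.map π₂)).get (Fin.cast pfB.symm i)
            = π₂ ((playsFrom (fun hist => pr (GA (hist.map π₁)) (GB (hist.map π₂))) [] ws).get
              (Fin.cast hb.symm i))
        simp [playsFrom, List.get_ofFn, h2, List.map_take]
        rfl
    rw [e1] at hA'
    rw [e2] at hB'
    intro δ h2δ hδN heδ hyp
    rw [habs _ hδN]
    exact ⟨hA' δ h2δ hδN heδ (fun γ hγ hγN => ((habs _ hγN _).mp (hyp γ hγ hγN)).1),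
           hB' δ h2δ hδN heδ (fun γ hγ hγN => ((habs _ hγN _).mp (hyp γ hγ hγN)).2)⟩
  · apply altSat_intro (fun hist => pr (GA' (hist.map π₁)) (GB' (hist.map π₂))) n [] []
    intro ws hws
    simp only [List.nil_append]
    intro ha hb
    have hwA : (ws.map π₁).length = n := by simp [hws]
    have pfA : (playsFrom GA' [] (ws.map π₁)).length = n := by simp [hws]
    have hwB : (ws.map π₂).length = n := by simp [hws]
    have pfB : (playsFrom GB' [] (ws.map π₂)).length = n := by simp [hws]
    have hA' := hGA' (ws.map π₁) hwA pfA hwA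
    have hB' := hGB' (ws.map π₂) hwB pfB hwB
    have e1 : (masg (π₁ c) (π₁ d) (π₁ ∘ e)
        (fun i => (playsFrom GA' [] (ws.map π₁)).get (Fin.cast pfA.symm i))
        (fun i => (ws.map π₁).get (Fin.cast hwA.symm i)))
        = π₁ ∘ masg c d e
          (fun i => (playsFrom (fun hist => pr (GA' (hist.map π₁)) (GB' (hist.map π₂))) [] ws).get
            (Fin.cast ha.symm i))
          (fun i => ws.get (Fin.cast hb.symm i)) := by
      funext m
      cases m with
      | x => rfl
      | y => rfl
      | z i => rfl
      | yb i =>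
        show (ws.map π₁).get (Fin.cast hwA.symm i) = π₁ (ws.get (Fin.cast hb.symm i))
        simp [List.get_eq_getElem, List.getElem_map]
      | xa i =>
        show (playsFrom GA' [] (ws.map π₁)).get (Fin.cast pfA.symm i)
            = π₁ ((playsFrom (fun hist => pr (GA' (hist.map π₁)) (GB' (hist.map π₂))) [] ws).get
              (Fin.cast ha.symm i))
        simp [playsFrom, List.get_ofFn, h1, List.map_take]
        rfl
    have e2 : (masg (π₂ c) (π₂ d) (π₂ ∘ e)
        (fun i => (playsFrom GB' [] (ws.map π₂)).get (Fin.cast pfB.symm i))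
        (fun i => (ws.map π₂).get (Fin.cast hwB.symm i)))
        = π₂ ∘ masg c d e
          (fun i => (playsFrom (fun hist => pr (GA' (hist.map π₁)) (GB' (hist.map π₂))) [] ws).get
            (Fin.cast ha.symm i))
          (fun i => ws.get (Fin.cast hb.symm i)) := by
      funext m
      cases m with
      | x => rfl
      | y => rfl
      | z i => rfl
      | yb i =>
        show (ws.map π₂).get (Fin.cast hwB.symm i) = π₂ (ws.get (Fin.cast hb.symm i))
        simp [List.get_eq_getElem, List.getElem_map]
      | xa i =>
        show (playsFrom GB' [] (ws.map π₂)).get (Fin.cast pfB.symm i)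
            = π₂ ((playsFrom (fun hist => pr (GA' (hist.map π₁)) (GB' (hist.map π₂))) [] ws).get
              (Fin.cast ha.symm i))
        simp [playsFrom, List.get_ofFn, h2, List.map_take]
        rfl
    rw [e1] at hA'
    rw [e2] at hB'
    intro δ h1δ hδN hoδ hyp
    rw [habs _ hδN]
    exact ⟨hA' δ h1δ hδN hoδ (fun γ hγ hγN => ((habs _ hγN _).mp (hyp γ hγ hγN)).1),
           hB' δ h1δ hδN hoδ (fun γ hγ hγN => ((habs _ hγN _).mp (hyp γ hγ hγN)).2)⟩

end Paper


/-- **Theorem A.5 (Appendix, preservation result).** Let `N` be even and let the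
`τ_α` (for words `α` over `{1,…,N}` of length `≤ N`) be formulas preserved by
direct products and by direct factors. Then the formula
`(∃y₁∀x₁ … ∃y_n∀x_n E₂) ∧ (∃x₁∀y₁ … ∃x_n∀y_n O₁)` is preserved by direct factors
and by direct products. -/
theorem combined_formula_preserved {L : FirstOrder.Language.{v, w}} {l n N : ℕ}
    (hN : Even N) (τ : List (Fin N) → L.Formula (Paper.MVar l n))
    (hτ : ∀ α : List (Fin N), α.length ≤ N →
      Paper.PreservedByFactors.{u} (τ α) ∧ Paper.PreservedByProducts.{u} (τ α)) :
    (∀ (A : Type u) (B : Type u) [L.Structure A] [L.Structure B]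
      (c d : A × B) (e : Fin l → A × B),
        Paper.CombSat N τ c d e →
          Paper.CombSat N τ c.1 d.1 (fun i => (e i).1) ∧
          Paper.CombSat N τ c.2 d.2 fun i => (e i).2) ∧
    (∀ (A : Type u) (B : Type u) [L.Structure A] [L.Structure B]
      (cA dA : A) (eA : Fin l → A) (cB dB : B) (eB : Fin l → B),
        Paper.CombSat N τ cA dA eA → Paper.CombSat N τ cB dB eB →
          Paper.CombSat N τ ((cA, cB) : A × B) (dA, dB) fun i => (eA i, eB i)) := by
  have habs : ∀ (A : Type u) (B : Type u) [L.Structure A] [L.Structure B],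
      ∀ α : List (Fin N), α.length ≤ N → ∀ v : Paper.MVar l n → A × B,
        (τ α).Realize v ↔
          ((τ α).Realize (Prod.fst ∘ v) ∧ (τ α).Realize (Prod.snd ∘ v)) := by
    intro A B _ _ α hα v
    constructor
    · intro hv
      exact (hτ α hα).1 A B v hv
    · rintro ⟨ha, hb⟩
      exact (hτ α hα).2 A B (fun i => (v i).1) (fun i => (v i).2) ha hb
  constructor
  · intro A B _ _ c d e h
    constructor
    · exact Paper.factor_core (Cf := A × B) (Af := A) (Bf := B) τ Prod.fst Prod.snd Prod.mk (fun _ _ => rfl) (fun _ _ => rfl)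
        (habs A B) c d e h
    · exact Paper.factor_core (Cf := A × B) (Af := B) (Bf := A) τ Prod.snd Prod.fst (fun b a => (a, b)) (fun _ _ => rfl)
        (fun _ _ => rfl)
        (fun α hα v => by rw [habs A B α hα v]; exact and_comm) c d e h
  · intro A B _ _ cA dA eA cB dB eB hA hB
    exact Paper.product_core (Cf := A × B) (Af := A) (Bf := B) τ Prod.fst Prod.snd Prod.mk (fun _ _ => rfl) (fun _ _ => rfl)
      (habs A B) (cA, cB) (dA, dB) (fun i => (eA i, eB i)) hA hB
end
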